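/- arXiv:1107.2170 — 4 statements merged into one kernel-verified Lean document; each statement's English description precedes it below -/
import Mathlib

section
/- For a connected graph G with diametrical path P, diam(G) ≤ mr^-(P) ≤ mr^-(G). -/
open Matrix SimpleGraph

attribute [local instance] Classical.propDecidable

/-- The set of real skew-symmetric matrices whose off-diagonal zero-nonzero
pattern is described by the graph `G`. -/
def IsSkewRep {V : Type*} [Fintype V] (G : SimpleGraph V) (A : Matrix V V ℝ) : Prop :=
  Aᵀ = -A ∧ ∀ i j, i ≠ j → (A i j ≠ 0 ↔ G.Adj i j)

/-- The minimum skew rank of a simple graph. -/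
noncomputable def minSkewRank {V : Type*} [Fintype V] (G : SimpleGraph V) : ℕ :=
  sInf {r | ∃ A : Matrix V V ℝ, IsSkewRep G A ∧ A.rank = r}

/-- The maximum skew rank of a simple graph. -/
noncomputable def maxSkewRank {V : Type*} [Fintype V] (G : SimpleGraph V) : ℕ :=
  sSup {r | ∃ A : Matrix V V ℝ, IsSkewRep G A ∧ A.rank = r}

/-- The matching number of a simple graph. -/
noncomputable def matchNum {V : Type*} [Fintype V] (G : SimpleGraph V) : ℕ :=
  sSup {n | ∃ M : G.Subgraph, M.IsMatching ∧ M.edgeSet.ncard = n}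

lemma exists_skewRep {V : Type*} [Fintype V] (G : SimpleGraph V) :
    ∃ A : Matrix V V ℝ, IsSkewRep G A := by
  classical
  letI : LinearOrder V := LinearOrder.lift' (Fintype.equivFin V) (Equiv.injective _)
  refine ⟨Matrix.of fun i j => if G.Adj i j then (if i < j then (1:ℝ) else -1) else 0, ?_, ?_⟩
  · ext i j
    simp only [transpose_apply, neg_apply, Matrix.of_apply]
    by_cases h : G.Adj i j
    · have h' : G.Adj j i := h.symm
      rcases lt_or_gt_of_ne h.ne with hlt | hgt
      · simp [h, h', hlt, lt_asymm hlt]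
      · simp [h, h', hgt, lt_asymm hgt]
    · have h' : ¬ G.Adj j i := fun hh => h hh.symm
      simp [h, h']
  · intro i j _
    by_cases h : G.Adj i j
    · by_cases hlt : i < j <;> simp [h, hlt]
    · simp [h]

lemma rank_submatrix_le'' {k l m : Type*} [Fintype k] [Fintype l] [Fintype m] [DecidableEq m]
    (A : Matrix m m ℝ) (f : k → m) (g : l → m) : (A.submatrix f g).rank ≤ A.rank := by
  classical
  have h1 : A.submatrix f g =
      (1 : Matrix m m ℝ).submatrix f id * A * (1 : Matrix m m ℝ).submatrix id g := by
    ext i j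
    simp [Matrix.mul_apply, Matrix.one_apply, Finset.sum_ite_eq, Finset.sum_ite_eq']
  rw [h1]
  exact le_trans (Matrix.rank_mul_le_left _ _) (Matrix.rank_mul_le_right _ _)

lemma path_rank {m : ℕ} (A : Matrix (Fin (m+1)) (Fin (m+1)) ℝ)
    (hA : IsSkewRep (pathGraph (m+1)) A) : m ≤ A.rank := by
  classical
  set C : Matrix (Fin m) (Fin m) ℝ := A.submatrix Fin.castSucc Fin.succ with hC
  have hdiag : ∀ i : Fin m, C i i ≠ 0 := by
    intro i
    apply (hA.2 i.castSucc i.succ (by simp [Fin.ext_iff])).mpr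
    rw [pathGraph_adj]
    left; simp
  have hzero : ∀ i j : Fin m, i < j → C i j = 0 := by
    intro i j hij
    by_contra h
    have hij' : (i : ℕ) < (j : ℕ) := hij
    have hne : i.castSucc ≠ j.succ := Fin.ne_of_val_ne (by simp; omega)
    have := (hA.2 i.castSucc j.succ hne).mp h
    rw [pathGraph_adj] at this
    simp only [Fin.coe_castSucc, Fin.val_succ] at this
    have : (i : ℕ) < (j : ℕ) := hij
    omega
  have hdet : C.det ≠ 0 := by
    rw [Matrix.det_of_lowerTriangular C (by intro i j hij; exact hzero i j hij)]
    exact Finset.prod_ne_zero_iff.mpr fun i _ => hdiag i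
  have hrank : C.rank = m := by
    rw [Matrix.rank_of_isUnit C ((Matrix.isUnit_iff_isUnit_det C).mpr hdet.isUnit)]
    simp
  calc m = C.rank := hrank.symm
    _ ≤ A.rank := rank_submatrix_le'' A _ _

/-- For a connected graph `G` with diametrical path `P` (an induced path whose
length equals the diameter of `G`), `diam(G) ≤ mr⁻(P) ≤ mr⁻(G)`. -/
theorem diam_le_minSkewRank_path_le {V : Type*} [Fintype V] (G : SimpleGraph V)
    (hG : G.Connected) (s : Set V) (n : ℕ)
    (hpath : Nonempty (G.induce s ≃g pathGraph n)) (hdiam : n = G.diam + 1) :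
    G.diam ≤ minSkewRank (G.induce s) ∧ minSkewRank (G.induce s) ≤ minSkewRank G := by
  classical
  subst hdiam
  obtain ⟨e⟩ := hpath
  constructor
  · have hne : {r | ∃ A : Matrix s s ℝ, IsSkewRep (G.induce s) A ∧ A.rank = r}.Nonempty := by
      obtain ⟨A, hA⟩ := exists_skewRep (G.induce s)
      exact ⟨A.rank, A, hA, rfl⟩
    obtain ⟨A, hA, hr⟩ := Nat.sInf_mem hne
    have key : G.diam ≤ A.rank := by
      set B : Matrix (Fin (G.diam + 1)) (Fin (G.diam + 1)) ℝ :=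
        A.submatrix (fun i => e.symm i) (fun i => e.symm i) with hB
      have hBrep : IsSkewRep (pathGraph (G.diam + 1)) B := by
        constructor
        · ext i j
          have := congrFun (congrFun hA.1 (e.symm i)) (e.symm j)
          simpa [hB, Matrix.transpose_apply] using this
        · intro i j hij
          have hne' : e.symm i ≠ e.symm j := fun h => hij (e.symm.injective h)
          rw [show B i j = A (e.symm i) (e.symm j) from rfl, hA.2 _ _ hne']
          exact e.symm.map_adj_iff
      have := path_rank B hBrep
      calc G.diam ≤ B.rank := this
        _ = A.rank := Matrix.rank_submatrix A e.symm.toEquiv e.symm.toEquiv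
    exact le_trans key (le_of_eq hr)
  · have hneG : {r | ∃ A : Matrix V V ℝ, IsSkewRep G A ∧ A.rank = r}.Nonempty := by
      obtain ⟨A, hA⟩ := exists_skewRep G
      exact ⟨A.rank, A, hA, rfl⟩
    obtain ⟨A, hA, hr⟩ := Nat.sInf_mem hneG
    have hrep : IsSkewRep (G.induce s) (A.submatrix Subtype.val Subtype.val) := by
      constructor
      · ext i j
        have := congrFun (congrFun hA.1 (i : V)) (j : V)
        simpa [Matrix.transpose_apply] using this
      · intro i j hij
        have hne' : (i : V) ≠ (j : V) := fun h => hij (Subtype.ext h)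
        exact hA.2 _ _ hne'
    calc minSkewRank (G.induce s) ≤ (A.submatrix Subtype.val Subtype.val).rank :=
          Nat.sInf_le ⟨_, hrep, rfl⟩
      _ ≤ A.rank := rank_submatrix_le'' A _ _
      _ = minSkewRank G := hr
end

section
/- For a simple graph G on n vertices, mr^-(G) = n = MR^-(G) if and only if G has a unique perfect matching. -/
open Matrix SimpleGraph

attribute [local instance] Classical.propDecidable

set_option linter.unusedSectionVars false
set_option linter.unusedVariables false
set_option linter.unnecessarySeqFocus false
set_option linter.unreachableTactic false
set_option linter.unusedTactic false
set_option maxHeartbeats 1000000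

/-! ### Basic facts about skew matrices, rank and determinant -/

lemma skew_diag {ι : Type*} {A : Matrix ι ι ℝ} (h : Aᵀ = -A) (i : ι) : A i i = 0 := by
  have := congrFun (congrFun h i) i
  simp only [transpose_apply, Matrix.neg_apply] at this
  linarith

lemma skew_inv {ι : Type*} [Fintype ι] [DecidableEq ι] {A : Matrix ι ι ℝ} (h : Aᵀ = -A)
    (hd : IsUnit A.det) : (A⁻¹)ᵀ = -(A⁻¹) := by
  have h1 : (-A⁻¹) * Aᵀ = 1 := by
    rw [h, Matrix.neg_mul, Matrix.mul_neg, neg_neg, Matrix.nonsing_inv_mul _ hd]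
  rw [Matrix.transpose_nonsing_inv, Matrix.inv_eq_left_inv h1]

lemma rank_eq_card_of_det {V : Type*} [Fintype V] [DecidableEq V] {A : Matrix V V ℝ} (h : A.det ≠ 0) :
    A.rank = Fintype.card V :=
  Matrix.rank_of_isUnit A (Matrix.isUnit_iff_isUnit_det A |>.mpr h.isUnit)

lemma det_ne_zero_of_rank_eq_card {V : Type*} [Fintype V] [DecidableEq V] {A : Matrix V V ℝ}
    (h : A.rank = Fintype.card V) : A.det ≠ 0 := by
  classical
  have hr : Module.finrank ℝ (LinearMap.range A.mulVecLin) = Module.finrank ℝ (V → ℝ) := by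
    rw [Matrix.rank] at h
    rw [h, Module.finrank_pi]
  have htop : LinearMap.range A.mulVecLin = ⊤ := Submodule.eq_top_of_finrank_eq hr
  have hsurj : Function.Surjective A.mulVecLin := LinearMap.range_eq_top.mp htop
  have hinj : Function.Injective A.mulVecLin :=
    (LinearMap.injective_iff_surjective_of_finrank_eq_finrank rfl).mpr hsurj
  let e := LinearEquiv.ofBijective A.mulVecLin ⟨hinj, hsurj⟩
  have hA : LinearMap.toMatrix' (A.mulVecLin) = A := by
    rw [← Matrix.toLin'_apply']; exact LinearMap.toMatrix'_toLin' A
  have hcomp : (e.symm.toLinearMap).comp A.mulVecLin = LinearMap.id := by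
    apply LinearMap.ext
    intro x
    have : e x = A.mulVecLin x := rfl
    simp only [LinearMap.coe_comp, Function.comp_apply, LinearMap.id_coe, id_eq]
    rw [← this, LinearEquiv.coe_coe, LinearEquiv.symm_apply_apply]
  have : (LinearMap.toMatrix' e.symm.toLinearMap) * A = 1 := by
    rw [← hA, ← LinearMap.toMatrix'_comp, hcomp, LinearMap.toMatrix'_id]
  exact Matrix.det_ne_zero_of_left_inverse this

/-! ### Polynomial functions of one real variable -/

def IsPolyFun (f : ℝ → ℝ) : Prop := ∃ p : Polynomial ℝ, ∀ t, f t = p.eval t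

lemma IsPolyFun.const (c : ℝ) : IsPolyFun fun _ => c := ⟨Polynomial.C c, by simp⟩

lemma IsPolyFun.id : IsPolyFun fun t => t := ⟨Polynomial.X, by simp⟩

lemma IsPolyFun.add {f g} (hf : IsPolyFun f) (hg : IsPolyFun g) :
    IsPolyFun fun t => f t + g t := by
  obtain ⟨p, hp⟩ := hf; obtain ⟨q, hq⟩ := hg
  exact ⟨p + q, fun t => by simp [hp, hq]⟩

lemma IsPolyFun.mul {f g} (hf : IsPolyFun f) (hg : IsPolyFun g) :
    IsPolyFun fun t => f t * g t := by
  obtain ⟨p, hp⟩ := hf; obtain ⟨q, hq⟩ := hg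
  exact ⟨p * q, fun t => by simp [hp, hq]⟩

lemma IsPolyFun.neg {f} (hf : IsPolyFun f) : IsPolyFun fun t => - f t := by
  simpa using (IsPolyFun.const (-1)).mul hf

lemma IsPolyFun.sum {ι : Type*} (s : Finset ι) (f : ι → ℝ → ℝ)
    (hf : ∀ i ∈ s, IsPolyFun (f i)) : IsPolyFun fun t => ∑ i ∈ s, f i t := by
  classical
  induction s using Finset.induction_on with
  | empty => simpa using IsPolyFun.const 0
  | @insert a s' h ih =>
    simp only [Finset.sum_insert h]
    exact (hf a (Finset.mem_insert_self a s')).add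
      (ih fun i hi => hf i (Finset.mem_insert_of_mem hi))

lemma IsPolyFun.prod {ι : Type*} (s : Finset ι) (f : ι → ℝ → ℝ)
    (hf : ∀ i ∈ s, IsPolyFun (f i)) : IsPolyFun fun t => ∏ i ∈ s, f i t := by
  classical
  induction s using Finset.induction_on with
  | empty => simpa using IsPolyFun.const 1
  | @insert a s' h ih =>
    simp only [Finset.prod_insert h]
    exact (hf a (Finset.mem_insert_self a s')).mul
      (ih fun i hi => hf i (Finset.mem_insert_of_mem hi))

lemma IsPolyFun.det {ι : Type*} [Fintype ι] [DecidableEq ι] (M : ℝ → Matrix ι ι ℝ)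
    (h : ∀ i j, IsPolyFun fun t => M t i j) : IsPolyFun fun t => (M t).det := by
  have : ∀ t, (M t).det = ∑ σ : Equiv.Perm ι,
      ((Equiv.Perm.sign σ : ℤ) : ℝ) * ∏ i, M t (σ i) i := by
    intro t
    rw [Matrix.det_apply]
    congr 1
    ext σ
    rcases Int.units_eq_one_or (Equiv.Perm.sign σ) with h1 | h1 <;> rw [h1] <;> simp
  simp only [this]
  exact IsPolyFun.sum _ _ fun σ _ =>
    (IsPolyFun.const _).mul (IsPolyFun.prod _ _ fun i _ => h (σ i) i)

lemma IsPolyFun.exists_ne_zero {f g : ℝ → ℝ} (hf : IsPolyFun f) (hg : IsPolyFun g)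
    {a b : ℝ} (ha : f a ≠ 0) (hb : g b ≠ 0) :
    ∃ t : ℝ, t ≠ 0 ∧ f t ≠ 0 ∧ g t ≠ 0 := by
  obtain ⟨p, hp⟩ := hf; obtain ⟨q, hq⟩ := hg
  have hp0 : p ≠ 0 := fun h => ha (by simp [hp, h])
  have hq0 : q ≠ 0 := fun h => hb (by simp [hq, h])
  have hfin : ({x | p.IsRoot x} ∪ {x | q.IsRoot x} ∪ {0}).Finite :=
    ((Polynomial.finite_setOf_isRoot hp0).union (Polynomial.finite_setOf_isRoot hq0)).union
      (Set.finite_singleton 0)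
  obtain ⟨t, ht⟩ := hfin.infinite_compl.nonempty
  simp only [Set.mem_compl_iff, Set.mem_union, Set.mem_setOf_eq, Set.mem_singleton_iff,
    not_or] at ht
  exact ⟨t, ht.2, by rw [hp]; exact ht.1.1, by rw [hq]; exact ht.1.2⟩

/-! ### Perfect matchings as involutions -/

section PM

variable {V : Type*} [Fintype V]

/-- A perfect matching given as a fixed-point-free involution along edges. -/
def PMfun (G : SimpleGraph V) (μ : V → V) : Prop :=
  (∀ v, μ (μ v) = v) ∧ ∀ v, G.Adj v (μ v)

lemma PMfun.ne {G : SimpleGraph V} {μ} (h : PMfun G μ) (v : V) : μ v ≠ v :=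
  fun hv => G.loopless.irrefl v (by have h2 := h.2 v; rwa [hv] at h2)

/-- The subgraph associated to a `PMfun`. -/
def PMfun.toSub {G : SimpleGraph V} {μ} (h : PMfun G μ) : G.Subgraph where
  verts := Set.univ
  Adj a b := G.Adj a b ∧ μ a = b
  adj_sub := fun ha => ha.1
  edge_vert := fun _ => Set.mem_univ _
  symm := by
    constructor
    intro a b hab
    exact ⟨hab.1.symm, by rw [← hab.2, h.1]⟩

lemma PMfun.toSub_isPM {G : SimpleGraph V} {μ} (h : PMfun G μ) :
    h.toSub.IsPerfectMatching := by
  constructor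
  · intro v _
    refine ⟨μ v, ⟨h.2 v, rfl⟩, ?_⟩
    rintro y ⟨_, rfl⟩
    rfl
  · intro v
    exact Set.mem_univ _

noncomputable def pmOf {G : SimpleGraph V} {M : G.Subgraph} (h : M.IsPerfectMatching)
    (v : V) : V := (h.1 (h.2 v)).choose

lemma pmOf_adj {G : SimpleGraph V} {M : G.Subgraph} (h : M.IsPerfectMatching) (v : V) :
    M.Adj v (pmOf h v) := (h.1 (h.2 v)).choose_spec.1

lemma pmOf_eq {G : SimpleGraph V} {M : G.Subgraph} (h : M.IsPerfectMatching) {v w : V}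
    (hw : M.Adj v w) : pmOf h v = w := ((h.1 (h.2 v)).choose_spec.2 w hw).symm

lemma pmOf_pmfun {G : SimpleGraph V} {M : G.Subgraph} (h : M.IsPerfectMatching) :
    PMfun G (pmOf h) := by
  refine ⟨fun v => ?_, fun v => M.adj_sub (pmOf_adj h v)⟩
  exact pmOf_eq h ((pmOf_adj h v).symm)

lemma pmOf_toSub {G : SimpleGraph V} {M : G.Subgraph} (h : M.IsPerfectMatching) :
    (pmOf_pmfun h).toSub = M := by
  ext a b
  · simp only [PMfun.toSub, Set.mem_univ, true_iff]
    exact h.2 a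
  · constructor
    · rintro ⟨_, rfl⟩
      exact pmOf_adj h a
    · intro hab
      exact ⟨M.adj_sub hab, pmOf_eq h hab⟩

lemma toSub_inj {G : SimpleGraph V} {μ μ'} (h : PMfun G μ) (h' : PMfun G μ')
    (he : h.toSub = h'.toSub) : μ = μ' := by
  funext v
  have h1 : h.toSub.Adj v (μ v) := ⟨h.2 v, rfl⟩
  rw [he] at h1
  exact h1.2.symm

lemma uniquePM_iff {G : SimpleGraph V} :
    (∃! M : G.Subgraph, M.IsPerfectMatching) ↔ (∃! μ : V → V, PMfun G μ) := by
  constructor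
  · rintro ⟨M, hM, hU⟩
    refine ⟨pmOf hM, pmOf_pmfun hM, ?_⟩
    intro μ hμ
    have := hU _ hμ.toSub_isPM
    apply toSub_inj hμ (pmOf_pmfun hM)
    rw [this, pmOf_toSub]
  · rintro ⟨μ, hμ, hU⟩
    refine ⟨hμ.toSub, hμ.toSub_isPM, ?_⟩
    intro M hM
    rw [← pmOf_toSub hM]
    congr 1
    exact hU _ (pmOf_pmfun hM)

end PM

/-! ### Blocks, Jacobi identity and Schur complements -/

section Blocks

variable {V : Type*} [Fintype V]

/-- Jacobi-type identity for block matrices. -/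
lemma jacobi_block {m n : Type*} [Fintype m] [Fintype n] [DecidableEq m] [DecidableEq n]
    (M : Matrix (m ⊕ n) (m ⊕ n) ℝ) (hM : IsUnit M.det) :
    M.det * ((M⁻¹).toBlocks₂₂).det = (M.toBlocks₁₁).det := by
  have hMP : M * M⁻¹ = 1 := Matrix.mul_nonsing_inv _ hM
  set a := M.toBlocks₁₁; set b := M.toBlocks₁₂; set c := M.toBlocks₂₁; set d := M.toBlocks₂₂
  set p := (M⁻¹).toBlocks₁₁; set q := (M⁻¹).toBlocks₁₂
  set r := (M⁻¹).toBlocks₂₁; set s := (M⁻¹).toBlocks₂₂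
  have hMdec : M = fromBlocks a b c d := (fromBlocks_toBlocks M).symm
  have hPdec : M⁻¹ = fromBlocks p q r s := (fromBlocks_toBlocks (M⁻¹)).symm
  have hprod : fromBlocks (a*p + b*r) (a*q + b*s) (c*p + d*r) (c*q + d*s)
      = fromBlocks 1 0 0 1 := by
    rw [← fromBlocks_multiply, ← hMdec, ← hPdec, hMP, fromBlocks_one]
  have h12 : a*q + b*s = 0 := by
    have h := congrArg Matrix.toBlocks₁₂ hprod
    simp only [Matrix.toBlocks_fromBlocks₁₂] at h
    exact h
  have h22 : c*q + d*s = 1 := by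
    have h := congrArg Matrix.toBlocks₂₂ hprod
    simp only [Matrix.toBlocks_fromBlocks₂₂] at h
    exact h
  have key : M * fromBlocks 1 q 0 s = fromBlocks a 0 c 1 := by
    rw [hMdec, fromBlocks_multiply]
    congr 1 <;> simp [h12, h22]
  have hdet := congrArg Matrix.det key
  rw [Matrix.det_mul, Matrix.det_fromBlocks_zero₂₁, Matrix.det_fromBlocks_zero₁₂] at hdet
  simpa using hdet

/-- The equivalence between `W ⊕ Fin 2` and `V`, where `W = {u,v}ᶜ`. -/
noncomputable def blockEquiv (u v : V) (huv : u ≠ v) : (↥({u,v}ᶜ : Set V)) ⊕ Fin 2 ≃ V where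
  toFun := Sum.elim Subtype.val ![u, v]
  invFun x := if hx : x = u then Sum.inr 0 else if hx' : x = v then Sum.inr 1 else
    Sum.inl ⟨x, by simp [hx, hx']⟩
  left_inv := by
    rintro (w | k)
    · have hw := w.2
      simp only [Set.mem_compl_iff, Set.mem_insert_iff, Set.mem_singleton_iff, not_or] at hw
      simp [hw.1, hw.2]
    · fin_cases k
      · simp
      · simp [huv.symm]
  right_inv := by
    intro x
    by_cases hx : x = u
    · simp [hx]
    · by_cases hx' : x = v
      · subst hx'
        simp [hx, huv.symm]
      · simp [hx, hx']

/-- Principal submatrix deleting rows/columns `u` and `v`. -/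
def subW (u v : V) (A : Matrix V V ℝ) :
    Matrix (↥({u,v}ᶜ : Set V)) (↥({u,v}ᶜ : Set V)) ℝ :=
  A.submatrix Subtype.val Subtype.val

lemma notmem_uv {u v : V} (w : ↥({u,v}ᶜ : Set V)) : (w:V) ≠ u ∧ (w:V) ≠ v := by
  have hw := w.2
  simp only [Set.mem_compl_iff, Set.mem_insert_iff, Set.mem_singleton_iff, not_or] at hw
  exact hw

/-- Jacobi identity: the principal minor deleting `u,v` of a skew matrix. -/
lemma jacobi_uv [DecidableEq V] {u v : V} (huv : u ≠ v) {A : Matrix V V ℝ} (hA : Aᵀ = -A)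
    (hd : A.det ≠ 0) : (subW u v A).det = A.det * (A⁻¹ u v)^2 := by
  set ε := blockEquiv u v huv
  set B := A.submatrix ε ε with hB
  have hdet : B.det = A.det := Matrix.det_submatrix_equiv_self ε A
  have hBinv : B⁻¹ = (A⁻¹).submatrix ε ε := by
    apply Matrix.inv_eq_left_inv
    rw [hB, Matrix.submatrix_mul_equiv, Matrix.nonsing_inv_mul _ (Ne.isUnit hd),
      Matrix.submatrix_one_equiv]
  have hj := jacobi_block B (by rw [hdet]; exact Ne.isUnit hd)
  have hPskew : (A⁻¹)ᵀ = -(A⁻¹) := skew_inv hA (Ne.isUnit hd)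
  have h11 : B.toBlocks₁₁ = subW u v A := rfl
  have h22 : (B⁻¹).toBlocks₂₂ = !![A⁻¹ u u, A⁻¹ u v; A⁻¹ v u, A⁻¹ v v] := by
    rw [hBinv]
    ext i j
    fin_cases i <;> fin_cases j <;> rfl
  rw [h11, h22] at hj
  rw [Matrix.det_fin_two_of, skew_diag hPskew, skew_diag hPskew] at hj
  have hvu : A⁻¹ v u = -(A⁻¹ u v) := by
    have := congrFun (congrFun hPskew u) v
    simp only [transpose_apply, Matrix.neg_apply] at this
    linarith
  rw [← hj, hdet, hvu]
  ring

/-- Modify the `(u,v)` and `(v,u)` entries of a matrix. -/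
noncomputable def modifyUV (A : Matrix V V ℝ) (u v : V) (y : ℝ) : Matrix V V ℝ :=
  Matrix.of fun i j => if i = u ∧ j = v then y else if i = v ∧ j = u then -y else A i j

lemma modifyUV_self {u v : V} (huv : u ≠ v) {A : Matrix V V ℝ} (hA : Aᵀ = -A) :
    modifyUV A u v (A u v) = A := by
  have hvu : A v u = -(A u v) := by
    have := congrFun (congrFun hA u) v
    simpa [transpose_apply, Matrix.neg_apply] using this
  ext i j
  simp only [modifyUV, Matrix.of_apply]
  split_ifs with h1 h2
  · rw [h1.1, h1.2]
  · rw [h2.1, h2.2, hvu]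
  · rfl

lemma modifyUV_skew {u v : V} (huv : u ≠ v) {A : Matrix V V ℝ} (hA : Aᵀ = -A) (y : ℝ) :
    (modifyUV A u v y)ᵀ = -(modifyUV A u v y) := by
  ext i j
  simp only [transpose_apply, Matrix.neg_apply, modifyUV, Matrix.of_apply]
  have hAij : A j i = -A i j := by
    have := congrFun (congrFun hA i) j
    simpa [transpose_apply, Matrix.neg_apply] using this
  split_ifs with h1 h2 h3 h4 h5 h6 h7 <;>
    first
      | rfl
      | (exact absurd (h1.1.symm.trans h3.2.symm) huv.symm)
      | simp_all
      | (exfalso; tauto)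
  all_goals tauto

lemma modifyUV_entry_ne {u v : V} {A : Matrix V V ℝ} {y : ℝ} {i j : V}
    (h1 : ¬(i = u ∧ j = v)) (h2 : ¬(i = v ∧ j = u)) : modifyUV A u v y i j = A i j := by
  simp only [modifyUV, Matrix.of_apply, if_neg h1, if_neg h2]

/-- Schur-complement formula: varying the `(u,v)` entry of a skew matrix whose
`{u,v}`-deleted principal submatrix is invertible, the determinant is
`det(A_W) * (y + w0)^2`. -/
lemma schur_family [DecidableEq V] {u v : V} (huv : u ≠ v) {A : Matrix V V ℝ} (hA : Aᵀ = -A)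
    (hW : (subW u v A).det ≠ 0) :
    ∃ w0 : ℝ, ∀ y : ℝ, (modifyUV A u v y).det = (subW u v A).det * (y + w0)^2 := by
  set ε := blockEquiv u v huv with hε
  set B := (A.submatrix ε ε).toBlocks₁₂ with hBdef
  set C := (A.submatrix ε ε).toBlocks₂₁ with hCdef
  have hεl : ∀ w : ↥({u,v}ᶜ : Set V), ε (Sum.inl w) = (w : V) := fun w => rfl
  have hε0 : ε (Sum.inr 0) = u := rfl
  have hε1 : ε (Sum.inr 1) = v := rfl
  haveI : Invertible (subW u v A) := Matrix.invertibleOfIsUnitDet _ (Ne.isUnit hW)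
  have hsubskew : (subW u v A)ᵀ = -(subW u v A) := by
    ext w w'
    have := congrFun (congrFun hA (w : V)) (w' : V)
    simpa [subW, transpose_apply] using this
  have hsubinv : ((subW u v A)⁻¹)ᵀ = -((subW u v A)⁻¹) := skew_inv hsubskew (Ne.isUnit hW)
  set K := C * (subW u v A)⁻¹ * B with hKdef
  have hBC : Bᵀ = -C := by
    ext k w
    have := congrFun (congrFun hA (ε (Sum.inr k))) (ε (Sum.inl w))
    simpa [hBdef, hCdef, Matrix.toBlocks₁₂, Matrix.toBlocks₂₁, transpose_apply] using this
  have hCB : Cᵀ = -B := by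
    ext w k
    have := congrFun (congrFun hA (ε (Sum.inl w))) (ε (Sum.inr k))
    simpa [hBdef, hCdef, Matrix.toBlocks₁₂, Matrix.toBlocks₂₁, transpose_apply] using this
  have hKskew : Kᵀ = -K := by
    rw [hKdef, Matrix.transpose_mul, Matrix.transpose_mul, hBC, hsubinv, hCB]
    simp only [Matrix.neg_mul, Matrix.mul_neg, neg_neg]
    rw [Matrix.mul_assoc]
  have hK00 : K 0 0 = 0 := skew_diag hKskew 0
  have hK11 : K 1 1 = 0 := skew_diag hKskew 1
  have hK10 : K 1 0 = -(K 0 1) := by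
    have := congrFun (congrFun hKskew 0) 1
    simp only [transpose_apply, Matrix.neg_apply] at this
    linarith
  refine ⟨-(K 0 1), fun y => ?_⟩
  have hblock : (modifyUV A u v y).submatrix ε ε
      = fromBlocks (subW u v A) B C (Matrix.of ![![0, y], ![-y, 0]]) := by
    ext i j
    rcases i with w | k <;> rcases j with w' | k'
    · have h1 := notmem_uv w
      have h2 := notmem_uv w'
      simp only [Matrix.submatrix_apply, hεl]
      rw [modifyUV_entry_ne (fun h => h1.1 h.1) (fun h => h1.2 h.1)]
      rfl
    · have h1 := notmem_uv w
      simp only [Matrix.submatrix_apply, hεl]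
      rw [modifyUV_entry_ne (fun h => h1.1 h.1) (fun h => h1.2 h.1)]
      rfl
    · have h2 := notmem_uv w'
      simp only [Matrix.submatrix_apply, hεl]
      rw [modifyUV_entry_ne (fun h => h2.2 h.2) (fun h => h2.1 h.2)]
      rfl
    · fin_cases k <;> fin_cases k'
      · show modifyUV A u v y u u = _
        rw [modifyUV_entry_ne (fun h => huv h.2) (fun h => huv h.1)]
        simpa [fromBlocks] using skew_diag hA u
      · show modifyUV A u v y u v = _
        simp [modifyUV, fromBlocks]
      · show modifyUV A u v y v u = _
        simp [modifyUV, fromBlocks, huv.symm, huv]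
      · show modifyUV A u v y v v = _
        rw [modifyUV_entry_ne (fun h => huv h.1.symm) (fun h => huv h.2.symm)]
        simpa [fromBlocks] using skew_diag hA v
  have hdet : (modifyUV A u v y).det = (fromBlocks (subW u v A) B C
      (Matrix.of ![![0, y], ![-y, 0]])).det := by
    rw [← hblock, Matrix.det_submatrix_equiv_self]
  rw [hdet, Matrix.det_fromBlocks₁₁, Matrix.invOf_eq_nonsing_inv]
  congr 1
  have : Matrix.of ![![0, y], ![-y, 0]] - C * (subW u v A)⁻¹ * B
      = !![0 - K 0 0, y - K 0 1; -y - K 1 0, 0 - K 1 1] := by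
    ext i j
    fin_cases i <;> fin_cases j <;> simp [hKdef, Matrix.sub_apply]
  rw [this, Matrix.det_fin_two_of, hK00, hK11, hK10]
  ring

end Blocks

/-! ### Induced representations, extension and restriction of matchings -/

section Induce

variable {V : Type*} [Fintype V]

lemma rep_induce {u v : V} {G : SimpleGraph V} {A : Matrix V V ℝ} (h : IsSkewRep G A) :
    IsSkewRep (G.induce ({u,v}ᶜ : Set V)) (subW u v A) := by
  constructor
  · ext w w'
    have := congrFun (congrFun h.1 (w : V)) (w' : V)
    simpa [subW, transpose_apply] using this
  · intro i j hij
    have : (i : V) ≠ (j : V) := fun hh => hij (Subtype.ext hh)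
    simpa [subW] using h.2 _ _ this

noncomputable def extFun (u v : V) (ν : ↥({u,v}ᶜ : Set V) → ↥({u,v}ᶜ : Set V)) : V → V :=
  fun x => if hx : x = u then v else if hx' : x = v then u
    else ↑(ν ⟨x, by simp [hx, hx']⟩)

lemma extFun_u {u v : V} (ν : ↥({u,v}ᶜ : Set V) → ↥({u,v}ᶜ : Set V)) :
    extFun u v ν u = v := by simp [extFun]

lemma extFun_coe {u v : V} (ν : ↥({u,v}ᶜ : Set V) → ↥({u,v}ᶜ : Set V))
    (w : ↥({u,v}ᶜ : Set V)) : extFun u v ν (w : V) = ↑(ν w) := by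
  obtain ⟨h1, h2⟩ := notmem_uv w
  simp only [extFun, dif_neg h1, dif_neg h2]

lemma extFun_pmfun {G : SimpleGraph V} {u v : V} (huv : u ≠ v) (hadj : G.Adj u v)
    {ν : ↥({u,v}ᶜ : Set V) → ↥({u,v}ᶜ : Set V)}
    (hν : PMfun (G.induce ({u,v}ᶜ : Set V)) ν) : PMfun G (extFun u v ν) := by
  have hext_u : extFun u v ν u = v := by simp [extFun]
  have hext_v : extFun u v ν v = u := by simp [extFun, huv.symm]
  have hext_w := extFun_coe ν
  constructor
  · intro x
    by_cases hx : x = u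
    · rw [hx, hext_u, hext_v]
    · by_cases hx' : x = v
      · rw [hx', hext_v, hext_u]
      · have hx2 : x = ((⟨x, by simp [hx, hx']⟩ : ↥({u,v}ᶜ : Set V)) : V) := rfl
        rw [hx2, hext_w, hext_w, hν.1]
  · intro x
    by_cases hx : x = u
    · rw [hx, hext_u]; exact hadj
    · by_cases hx' : x = v
      · rw [hx', hext_v]; exact hadj.symm
      · have hx2 : x = ((⟨x, by simp [hx, hx']⟩ : ↥({u,v}ᶜ : Set V)) : V) := rfl
        rw [hx2, hext_w]
        exact hν.2 ⟨x, by simp [hx, hx']⟩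

lemma pmfun_inj {G : SimpleGraph V} {μ : V → V} (h : PMfun G μ) :
    Function.Injective μ := by
  intro a b hab
  rw [← h.1 a, hab, h.1]

noncomputable def resFun {G : SimpleGraph V} {μ : V → V} (h : PMfun G μ) (u : V) :
    ↥({u, μ u}ᶜ : Set V) → ↥({u, μ u}ᶜ : Set V) := fun w =>
  ⟨μ (w : V), by
    obtain ⟨h1, h2⟩ := notmem_uv w
    simp only [Set.mem_compl_iff, Set.mem_insert_iff, Set.mem_singleton_iff, not_or]
    constructor
    · intro hh
      have h3 := congrArg μ hh
      rw [h.1] at h3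
      exact h2 h3
    · intro hh
      exact h1 (pmfun_inj h hh)⟩

lemma resFun_pmfun {G : SimpleGraph V} {μ : V → V} (h : PMfun G μ) (u : V) :
    PMfun (G.induce ({u, μ u}ᶜ : Set V)) (resFun h u) := by
  constructor
  · intro w
    apply Subtype.ext
    simp [resFun, h.1]
  · intro w
    simpa [resFun] using h.2 (w : V)

end Induce

/-! ### The two key induction arguments -/

universe uu

/-- Any graph admitting an invertible skew representation has a perfect matching. -/
lemma exists_pmfun_of_det_ne (n : ℕ) : ∀ {V : Type uu} [Fintype V] [DecidableEq V] (G : SimpleGraph V)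
    (A : Matrix V V ℝ), Fintype.card V ≤ n → IsSkewRep G A → A.det ≠ 0 →
    ∃ μ, PMfun G μ := by
  induction n with
  | zero =>
    intro V _ _ G A hcard _ _
    have hempty : IsEmpty V := by
      rw [← Fintype.card_eq_zero_iff]
      omega
    exact ⟨id, fun v => (hempty.false v).elim, fun v => (hempty.false v).elim⟩
  | succ n ih =>
    intro V _ _ G A hcard hrep hdet
    by_cases hV : IsEmpty V
    · exact ⟨id, fun v => (hV.false v).elim, fun v => (hV.false v).elim⟩
    rw [not_isEmpty_iff] at hV
    obtain ⟨u⟩ := hV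
    have hsum : ∑ j, A u j * (Matrix.adjugate A) j u = A.det := by
      have h := congrFun (congrFun (Matrix.mul_adjugate A) u) u
      simpa [Matrix.mul_apply, Matrix.smul_apply, Matrix.one_apply] using h
    have hex : ∃ j, A u j * Matrix.adjugate A j u ≠ 0 := by
      by_contra h
      push_neg at h
      exact hdet (by rw [← hsum]; exact Finset.sum_eq_zero fun j _ => h j)
    obtain ⟨v, hv⟩ := hex
    have hAuv : A u v ≠ 0 := fun h => hv (by rw [h]; ring)
    have hadjvu : Matrix.adjugate A v u ≠ 0 := fun h => hv (by rw [h]; ring)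
    have huv : u ≠ v := by
      rintro rfl
      exact hAuv (skew_diag hrep.1 u)
    have hadj : G.Adj u v := (hrep.2 u v huv).mp hAuv
    have hinv_vu : A⁻¹ v u ≠ 0 := by
      rw [Matrix.inv_def, Matrix.smul_apply, Ring.inverse_eq_inv']
      exact mul_ne_zero (inv_ne_zero hdet) hadjvu
    have hinv_uv : A⁻¹ u v ≠ 0 := by
      have hskewinv := skew_inv hrep.1 (Ne.isUnit hdet)
      have h := congrFun (congrFun hskewinv v) u
      simp only [transpose_apply, Matrix.neg_apply] at h
      intro h0
      rw [h0] at h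
      exact hinv_vu (by linarith)
    have hsubdet : (subW u v A).det ≠ 0 := by
      rw [jacobi_uv huv hrep.1 hdet]
      exact mul_ne_zero hdet (pow_ne_zero 2 hinv_uv)
    have hcard' : Fintype.card ↥({u,v}ᶜ : Set V) ≤ n := by
      have hlt : Fintype.card ↥({u,v}ᶜ : Set V) < Fintype.card V := by
        apply Fintype.card_lt_of_injective_of_notMem Subtype.val Subtype.val_injective (b := u)
        rw [Subtype.range_coe]
        simp
      omega
    obtain ⟨ν, hν⟩ := ih _ _ hcard' (rep_induce hrep) hsubdet
    exact ⟨extFun u v ν, extFun_pmfun huv hadj hν⟩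

/-- If `G` has a unique perfect matching then every skew representation is invertible. -/
lemma det_ne_of_uniquePM (n : ℕ) : ∀ {V : Type uu} [Fintype V] [DecidableEq V] (G : SimpleGraph V)
    (A : Matrix V V ℝ) (μ0 : V → V), Fintype.card V ≤ n → IsSkewRep G A → PMfun G μ0 →
    (∀ μ, PMfun G μ → μ = μ0) → A.det ≠ 0 := by
  induction n with
  | zero =>
    intro V _ _ G A μ0 hcard _ _ _
    have hempty : IsEmpty V := by
      rw [← Fintype.card_eq_zero_iff]
      omega
    simp [Matrix.det_isEmpty]
  | succ n ih =>
    intro V _ _ G A μ0 hcard hrep hμ0 huniq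
    by_cases hV : IsEmpty V
    · simp [Matrix.det_isEmpty]
    rw [not_isEmpty_iff] at hV
    obtain ⟨u⟩ := hV
    have hadj : G.Adj u (μ0 u) := hμ0.2 u
    have huv : u ≠ μ0 u := hadj.ne
    -- the induced graph has a unique perfect matching
    have hres := resFun_pmfun hμ0 u
    have hresuniq : ∀ ν, PMfun (G.induce ({u, μ0 u}ᶜ : Set V)) ν → ν = resFun hμ0 u := by
      intro ν hν
      have hext := huniq _ (extFun_pmfun huv hadj hν)
      funext w
      apply Subtype.ext
      have h1 : extFun u (μ0 u) ν ↑w = ↑(ν w) := extFun_coe ν w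
      rw [hext] at h1
      exact h1.symm
    have hcard' : Fintype.card ↥({u, μ0 u}ᶜ : Set V) ≤ n := by
      have hlt : Fintype.card ↥({u, μ0 u}ᶜ : Set V) < Fintype.card V := by
        apply Fintype.card_lt_of_injective_of_notMem Subtype.val Subtype.val_injective (b := u)
        rw [Subtype.range_coe]
        simp
      omega
    have hsubdet : (subW u (μ0 u) A).det ≠ 0 :=
      ih _ _ _ hcard' (rep_induce hrep) hres hresuniq
    obtain ⟨w0, hw⟩ := schur_family huv hrep.1 hsubdet
    -- the zero-modified matrix is singular
    have h0 : (modifyUV A u (μ0 u) 0).det = 0 := by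
      by_contra hne
      -- it is a skew representation of G minus the edge (u, μ0 u)
      set H : SimpleGraph V :=
        { Adj := fun a b => G.Adj a b ∧ ¬((a = u ∧ b = μ0 u) ∨ (a = μ0 u ∧ b = u))
          symm := by
            constructor
            intro a b hab
            exact ⟨hab.1.symm, fun h => hab.2 (h.elim (fun h' => Or.inr ⟨h'.2, h'.1⟩)
              (fun h' => Or.inl ⟨h'.2, h'.1⟩))⟩
          loopless := ⟨fun a ha => G.loopless.irrefl a ha.1⟩ } with hHdef
      have hHrep : IsSkewRep H (modifyUV A u (μ0 u) 0) := by
        constructor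
        · exact modifyUV_skew huv hrep.1 0
        · intro i j hij
          by_cases h1 : i = u ∧ j = μ0 u
          · simp only [modifyUV, Matrix.of_apply, if_pos h1, hHdef]
            constructor
            · intro h; exact absurd rfl h
            · rintro ⟨-, hcon⟩
              exact absurd (Or.inl h1) hcon
          · by_cases h2 : i = μ0 u ∧ j = u
            · simp only [modifyUV, Matrix.of_apply, if_neg h1, if_pos h2, hHdef]
              constructor
              · intro h; exact absurd neg_zero h
              · rintro ⟨-, hcon⟩
                exact absurd (Or.inr h2) hcon
            · rw [modifyUV_entry_ne h1 h2]
              rw [hrep.2 i j hij]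
              constructor
              · intro h; exact ⟨h, fun hcon => hcon.elim (fun h' => h1 h') (fun h' => h2 h')⟩
              · intro h; exact h.1
      obtain ⟨ν, hν⟩ := exists_pmfun_of_det_ne (Fintype.card V) H _ le_rfl hHrep hne
      have hνG : PMfun G ν := ⟨hν.1, fun x => (hν.2 x).1⟩
      have hν0 : ν = μ0 := huniq _ hνG
      have := (hν.2 u).2
      rw [hν0] at this
      exact this (Or.inl ⟨rfl, rfl⟩)
    have hw0 : w0 = 0 := by
      have h := hw 0
      rw [h0, zero_add] at h
      rcases mul_eq_zero.mp h.symm with h' | h'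
      · exact absurd h' hsubdet
      · exact pow_eq_zero_iff (by norm_num) |>.mp h'
    have hdetA : A.det = (subW u (μ0 u) A).det * (A u (μ0 u))^2 := by
      have h := hw (A u (μ0 u))
      rw [modifyUV_self huv hrep.1, hw0, add_zero] at h
      exact h
    rw [hdetA]
    exact mul_ne_zero hsubdet (pow_ne_zero 2 ((hrep.2 u (μ0 u) huv).mpr hadj))

/-! ### Matrices with prescribed support, and a genericity engine -/

section MatZ

variable {V : Type*} [Fintype V] [DecidableEq V]

noncomputable def MatZ (s : Finset (V × V)) (z : V × V → ℝ) : Matrix V V ℝ :=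
  Matrix.of fun i j => if (i,j) ∈ s then z (i,j) else if (j,i) ∈ s then -z (j,i) else 0

lemma matZ_skew {s : Finset (V × V)} (hs : ∀ p ∈ s, (p.2, p.1) ∉ s) (z : V × V → ℝ) :
    (MatZ s z)ᵀ = -(MatZ s z) := by
  ext i j
  simp only [transpose_apply, Matrix.neg_apply, MatZ, Matrix.of_apply]
  by_cases h1 : (j,i) ∈ s
  · have h2 : (i,j) ∉ s := hs (j,i) h1
    rw [if_pos h1, if_neg h2, if_pos h1]
    ring
  · by_cases h2 : (i,j) ∈ s
    · rw [if_neg h1, if_pos h2, if_pos h2]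
    · simp [h1, h2]

lemma matZ_entry_polyfun (s : Finset (V × V)) (p : V × V) (z : V × V → ℝ) (i j : V) :
    IsPolyFun fun t => MatZ s (Function.update z p t) i j := by
  simp only [MatZ, Matrix.of_apply]
  by_cases h1 : (i,j) ∈ s
  · simp only [if_pos h1]
    by_cases h2 : (i,j) = p
    · subst h2
      simp only [Function.update_self]
      exact IsPolyFun.id
    · simp only [Function.update_of_ne h2]
      exact IsPolyFun.const _
  · simp only [if_neg h1]
    by_cases h3 : (j,i) ∈ s
    · simp only [if_pos h3]
      by_cases h2 : (j,i) = p
      · subst h2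
        simp only [Function.update_self]
        exact IsPolyFun.id.neg
      · simp only [Function.update_of_ne h2]
        exact IsPolyFun.const _
    · simp only [if_neg h3]
      exact IsPolyFun.const 0

lemma matZ_indicator_zero (s : Finset (V × V)) (m : V → V)
    (hinv : ∀ x, m (m x) = x) {i j : V} (hne : j ≠ m i) :
    MatZ s (fun p => if p ∈ s ∧ m p.1 = p.2 then (1:ℝ) else 0) i j = 0 := by
  simp only [MatZ, Matrix.of_apply]
  by_cases h1 : (i,j) ∈ s
  · rw [if_pos h1, if_neg]
    rintro ⟨-, h⟩
    exact hne h.symm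
  · rw [if_neg h1]
    by_cases h2 : (j,i) ∈ s
    · rw [if_pos h2, if_neg, neg_zero]
      rintro ⟨-, h⟩
      have h3 := congrArg m h
      rw [hinv] at h3
      exact hne h3
    · rw [if_neg h2]

lemma matZ_indicator_prod {s : Finset (V × V)} (hs2 : ∀ p ∈ s, (p.2,p.1) ∉ s)
    (m : V → V) (hinv : ∀ x, m (m x) = x) {i : V}
    (hcov : (i, m i) ∈ s ∨ (m i, i) ∈ s) :
    MatZ s (fun p => if p ∈ s ∧ m p.1 = p.2 then (1:ℝ) else 0) i (m i)
      * MatZ s (fun p => if p ∈ s ∧ m p.1 = p.2 then (1:ℝ) else 0) (m i) i = -1 := by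
  rcases hcov with h | h
  · have h' : (m i, i) ∉ s := hs2 _ h
    have e1 : MatZ s (fun p => if p ∈ s ∧ m p.1 = p.2 then (1:ℝ) else 0) i (m i) = (1:ℝ) := by
      simp only [MatZ, Matrix.of_apply]
      simp [h]
    have e2 : MatZ s (fun p => if p ∈ s ∧ m p.1 = p.2 then (1:ℝ) else 0) (m i) i = (-1:ℝ) := by
      simp only [MatZ, Matrix.of_apply]
      simp [h, h']
    rw [e1, e2]
    norm_num
  · have h' : (i, m i) ∉ s := hs2 _ h
    have e1 : MatZ s (fun p => if p ∈ s ∧ m p.1 = p.2 then (1:ℝ) else 0) i (m i) = (-1:ℝ) := by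
      simp only [MatZ, Matrix.of_apply]
      simp [h, h', hinv i]
    have e2 : MatZ s (fun p => if p ∈ s ∧ m p.1 = p.2 then (1:ℝ) else 0) (m i) i = (1:ℝ) := by
      simp only [MatZ, Matrix.of_apply]
      simp [h, hinv i]
    rw [e1, e2]
    norm_num

end MatZ

lemma det_invol_ne_zero {ι : Type*} [Fintype ι] [DecidableEq ι] (M : Matrix ι ι ℝ)
    (m : ι → ι) (hinv : ∀ i, m (m i) = i)
    (hzero : ∀ i j, j ≠ m i → M i j = 0) (hprod : ∀ i, M i (m i) * M (m i) i = -1) :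
    M.det ≠ 0 := by
  have hMM : M * M = -1 := by
    ext i j
    rw [Matrix.mul_apply]
    rw [Finset.sum_eq_single (m i) (fun b _ hb => by rw [hzero i b hb, zero_mul])
      (fun h => absurd (Finset.mem_univ _) h)]
    by_cases hij : j = i
    · subst hij
      rw [hprod]
      simp [Matrix.one_apply]
    · rw [hzero (m i) j (by rw [hinv]; exact hij), mul_zero]
      have hij' : ¬ i = j := fun h => hij h.symm
      simp [Matrix.neg_apply, Matrix.one_apply, hij']
  have hd : M.det * M.det = (-1 : ℝ)^(Fintype.card ι) := by
    rw [← Matrix.det_mul, hMM, show (-1 : Matrix ι ι ℝ) = -(1 : Matrix ι ι ℝ) from rfl,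
      Matrix.det_neg, Matrix.det_one, mul_one]
  intro h
  rw [h, zero_mul] at hd
  exact pow_ne_zero (Fintype.card ι) (by norm_num : (-1 : ℝ) ≠ 0) hd.symm

/-- The genericity engine: we can simultaneously make two polynomial functionals
nonvanishing with all coordinates in `s` nonzero. -/
lemma engine {V : Type*} [Fintype V] {F1 F2 : ((V × V) → ℝ) → ℝ}
    (h1p : ∀ p z, IsPolyFun fun t => F1 (Function.update z p t))
    (h2p : ∀ p z, IsPolyFun fun t => F2 (Function.update z p t)) (s : Finset (V × V)) :
    ∀ (z1 z2 : (V × V) → ℝ), (∀ p ∉ s, z1 p = z2 p) → F1 z1 ≠ 0 → F2 z2 ≠ 0 →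
    ∃ z, F1 z ≠ 0 ∧ F2 z ≠ 0 ∧ (∀ p ∈ s, z p ≠ 0) ∧ (∀ p ∉ s, z p = z1 p) := by
  classical
  induction s using Finset.induction_on with
  | empty =>
    intro z1 z2 hag h1 h2
    have hz : z1 = z2 := funext fun p => hag p (Finset.notMem_empty p)
    exact ⟨z1, h1, by rw [hz]; exact h2,
      fun p hp => absurd hp (Finset.notMem_empty p), fun p _ => rfl⟩
  | @insert p s hp ih =>
    intro z1 z2 hag h1 h2
    obtain ⟨t, ht0, ht1, ht2⟩ := IsPolyFun.exists_ne_zero (h1p p z1) (h2p p z2)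
      (a := z1 p) (b := z2 p) (by rw [Function.update_eq_self]; exact h1)
      (by rw [Function.update_eq_self]; exact h2)
    have hag' : ∀ q ∉ s, Function.update z1 p t q = Function.update z2 p t q := by
      intro q hq
      by_cases hqp : q = p
      · subst hqp
        simp [Function.update_self]
      · rw [Function.update_of_ne hqp, Function.update_of_ne hqp]
        exact hag q (by simp [Finset.mem_insert, hqp, hq])
    obtain ⟨z, hz1, hz2, hzs, hzoff⟩ := ih _ _ hag' ht1 ht2
    refine ⟨z, hz1, hz2, ?_, ?_⟩
    · intro q hq
      rcases Finset.mem_insert.mp hq with rfl | hq'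
      · rw [hzoff q hp, Function.update_self]
        exact ht0
      · exact hzs q hq'
    · intro q hq
      have hqp : q ≠ p := fun h => hq (h ▸ Finset.mem_insert_self p s)
      have hqs : q ∉ s := fun h => hq (Finset.mem_insert_of_mem h)
      rw [hzoff q hqs, Function.update_of_ne hqp]

/-- Every graph has a skew representation. -/
lemma repExists {V : Type*} [Fintype V] (G : SimpleGraph V) : ∃ A, IsSkewRep G A := by
  classical
  let ord := Fintype.equivFin V
  set s : Finset (V × V) :=
    Finset.univ.filter (fun p : V × V => G.Adj p.1 p.2 ∧ ord p.1 < ord p.2) with hs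
  have hs2 : ∀ p ∈ s, (p.2, p.1) ∉ s := by
    intro p hps hcon
    simp only [hs, Finset.mem_filter] at hps hcon
    exact absurd hcon.2.2 (not_lt.mpr (le_of_lt hps.2.2))
  refine ⟨MatZ s (fun _ => 1), matZ_skew hs2 _, ?_⟩
  intro i j hij
  have hordne : G.Adj i j → ord i ≠ ord j := fun _ h => hij (ord.injective h)
  simp only [MatZ, Matrix.of_apply]
  by_cases h1 : (i,j) ∈ s
  · have hadj : G.Adj i j := by
      simp only [hs, Finset.mem_filter] at h1
      exact h1.2.1
    rw [if_pos h1]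
    simp [hadj]
  · rw [if_neg h1]
    by_cases h2 : (j,i) ∈ s
    · have hadj : G.Adj i j := by
        simp only [hs, Finset.mem_filter] at h2
        exact h2.2.1.symm
      rw [if_pos h2]
      simp [hadj]
    · rw [if_neg h2]
      simp only [ne_eq, not_true_eq_false, false_iff]
      intro hadj
      rcases lt_or_gt_of_ne (hordne hadj) with h | h
      · exact h1 (by simp [hs, hadj, h])
      · exact h2 (by simp [hs, hadj.symm, h])

/-- `mr⁻(G) = |G| = MR⁻(G)` if and only if `G` has a unique perfect matching. -/
theorem minSkewRank_eq_card_iff_unique_perfect_matching {V : Type*} [Fintype V]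
    (G : SimpleGraph V) :
    (minSkewRank G = Fintype.card V ∧ maxSkewRank G = Fintype.card V) ↔
      (∃! M : G.Subgraph, M.IsPerfectMatching) := by
  classical
  set RkSet := {r | ∃ A : Matrix V V ℝ, IsSkewRep G A ∧ A.rank = r} with hRkdef
  obtain ⟨A0, hA0⟩ := repExists G
  have hne : RkSet.Nonempty := ⟨A0.rank, A0, hA0, rfl⟩
  have hbdd : BddAbove RkSet := by
    refine ⟨Fintype.card V, ?_⟩
    rintro r ⟨A, hA, rfl⟩
    exact Matrix.rank_le_card_width A
  constructor
  · rintro ⟨hmin, hmax⟩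
    rw [uniquePM_iff]
    have hsupmem : Fintype.card V ∈ RkSet := by
      have h := Nat.sSup_mem hne hbdd
      rwa [show sSup RkSet = maxSkewRank G from rfl, hmax] at h
    obtain ⟨A, hA, hrk⟩ := hsupmem
    obtain ⟨μ0, hμ0⟩ := exists_pmfun_of_det_ne (Fintype.card V) G A le_rfl hA
      (det_ne_zero_of_rank_eq_card hrk)
    refine ⟨μ0, hμ0, ?_⟩
    intro μ hμ
    by_contra hneq
    have hxu : ∃ u, μ u ≠ μ0 u := by
      by_contra h
      push_neg at h
      exact hneq (funext h)
    obtain ⟨u, hu⟩ := hxu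
    have hadj_u : G.Adj u (μ u) := hμ.2 u
    have huv : u ≠ μ u := hadj_u.ne
    let ord := Fintype.equivFin V
    set s : Finset (V × V) := Finset.univ.filter
      (fun p : V × V => G.Adj p.1 p.2 ∧ ord p.1 < ord p.2 ∧
        ¬(p = (u, μ u) ∨ p = (μ u, u))) with hsdef
    have hs2 : ∀ p ∈ s, (p.2, p.1) ∉ s := by
      intro p hps hcon
      simp only [hsdef, Finset.mem_filter] at hps hcon
      exact absurd hcon.2.2.1 (not_lt.mpr (le_of_lt hps.2.2.1))
    have hswap : ∀ i j : V, (¬(((i,j) : V × V) = (u, μ u) ∨ ((i,j) : V × V) = (μ u, u))) →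
        (¬(((j,i) : V × V) = (u, μ u) ∨ ((j,i) : V × V) = (μ u, u))) := by
      intro i j h hcon
      apply h
      rcases hcon with h' | h'
      · right
        rw [Prod.mk.injEq] at h' ⊢
        exact ⟨h'.2, h'.1⟩
      · left
        rw [Prod.mk.injEq] at h' ⊢
        exact ⟨h'.2, h'.1⟩
    have hcover : ∀ i j : V, G.Adj i j →
        (¬(((i,j) : V × V) = (u, μ u) ∨ ((i,j) : V × V) = (μ u, u))) →
        ((i,j) ∈ s ∨ (j,i) ∈ s) := by
      intro i j hadj hne'
      have hij : i ≠ j := hadj.ne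
      have hord : ord i ≠ ord j := fun h => hij (ord.injective h)
      rcases lt_or_gt_of_ne hord with h | h
      · left
        simp only [hsdef, Finset.mem_filter, Finset.mem_univ, true_and]
        exact ⟨hadj, h, hne'⟩
      · right
        simp only [hsdef, Finset.mem_filter, Finset.mem_univ, true_and]
        exact ⟨hadj.symm, h, hswap i j hne'⟩
    -- the two indicator weight functions
    set z1 : V × V → ℝ := fun p => if p ∈ s ∧ μ0 p.1 = p.2 then (1:ℝ) else 0 with hz1def
    set z2 : V × V → ℝ := fun p => if p ∈ s ∧ μ p.1 = p.2 then (1:ℝ) else 0 with hz2def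
    set F1 : ((V × V) → ℝ) → ℝ := fun z => (MatZ s z).det with hF1def
    set F2 : ((V × V) → ℝ) → ℝ := fun z => (subW u (μ u) (MatZ s z)).det with hF2def
    have h1p : ∀ p z, IsPolyFun fun t => F1 (Function.update z p t) := by
      intro p z
      exact IsPolyFun.det _ fun i j => matZ_entry_polyfun s p z i j
    have h2p : ∀ p z, IsPolyFun fun t => F2 (Function.update z p t) := by
      intro p z
      exact IsPolyFun.det _ fun w w' => matZ_entry_polyfun s p z (w : V) (w' : V)
    have hF1z1 : F1 z1 ≠ 0 := by
      apply det_invol_ne_zero _ μ0 hμ0.1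
      · intro i j hne'
        exact matZ_indicator_zero s μ0 hμ0.1 hne'
      · intro i
        apply matZ_indicator_prod hs2 μ0 hμ0.1
        apply hcover i (μ0 i) (hμ0.2 i)
        rintro (h' | h')
        · rw [Prod.mk.injEq] at h'
          obtain ⟨rfl, h'2⟩ := h'
          exact hu h'2.symm
        · rw [Prod.mk.injEq] at h'
          obtain ⟨h'1, h'2⟩ := h'
          apply hu
          rw [h'1] at h'2
          have h3 := congrArg μ0 h'2
          rw [hμ0.1] at h3
          exact h3
    have hF2z2 : F2 z2 ≠ 0 := by
      apply det_invol_ne_zero _ (resFun hμ u) (resFun_pmfun hμ u).1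
      · intro w w' hne'
        have hvne : (w' : V) ≠ μ (w : V) := by
          intro hh
          exact hne' (Subtype.ext hh)
        exact matZ_indicator_zero s μ hμ.1 hvne
      · intro w
        have hcov : ((w : V), μ (w : V)) ∈ s ∨ (μ (w : V), (w : V)) ∈ s := by
          apply hcover _ _ (hμ.2 (w : V))
          rintro (h' | h') <;> rw [Prod.mk.injEq] at h'
          · exact (notmem_uv w).1 h'.1
          · exact (notmem_uv w).2 h'.1
        exact matZ_indicator_prod hs2 μ hμ.1 hcov
    have hag : ∀ p ∉ s, z1 p = z2 p := by
      intro p hp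
      simp only [hz1def, hz2def]
      rw [if_neg (fun hc => hp hc.1), if_neg (fun hc => hp hc.1)]
    obtain ⟨z, hz1, hz2, hzs, hzoff⟩ := engine h1p h2p s z1 z2 hag hF1z1 hF2z2
    simp only [hF1def] at hz1
    simp only [hF2def] at hz2
    set N := MatZ s z with hNdef
    have hNskew : Nᵀ = -N := matZ_skew hs2 z
    obtain ⟨w0, hw⟩ := schur_family huv hNskew hz2
    have h1s : ((u, μ u) : V × V) ∉ s := by
      intro hmem
      simp only [hsdef, Finset.mem_filter] at hmem
      exact hmem.2.2.2 (Or.inl trivial)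
    have h2s : ((μ u, u) : V × V) ∉ s := by
      intro hmem
      simp only [hsdef, Finset.mem_filter] at hmem
      exact hmem.2.2.2 (Or.inr trivial)
    have hNuv0 : N u (μ u) = 0 := by
      simp only [hNdef, MatZ, Matrix.of_apply, if_neg h1s, if_neg h2s]
    have hN0 : modifyUV N u (μ u) 0 = N := by
      ext i j
      by_cases h1 : i = u ∧ j = μ u
      · simp only [modifyUV, Matrix.of_apply, if_pos h1]
        rw [h1.1, h1.2]
        exact hNuv0.symm
      · by_cases h2 : i = μ u ∧ j = u
        · simp only [modifyUV, Matrix.of_apply, if_neg h1, if_pos h2]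
          rw [h2.1, h2.2]
          have h3 := congrFun (congrFun hNskew u) (μ u)
          simp only [transpose_apply, Matrix.neg_apply] at h3
          rw [neg_zero, h3, hNuv0, neg_zero]
        · rw [modifyUV_entry_ne h1 h2]
    have hw0ne : w0 ≠ 0 := by
      intro h0
      apply hz1
      have h := hw 0
      rw [hN0, h0, add_zero] at h
      rw [h]
      norm_num
    set Astar := modifyUV N u (μ u) (-w0) with hAstardef
    have hdet0 : Astar.det = 0 := by
      rw [hAstardef, hw (-w0)]
      norm_num
    have hrepA : IsSkewRep G Astar := by
      constructor
      · exact modifyUV_skew huv hNskew _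
      · intro i j hij
        by_cases h1 : i = u ∧ j = μ u
        · simp only [hAstardef, modifyUV, Matrix.of_apply, if_pos h1]
          rw [h1.1, h1.2]
          constructor
          · intro _; exact hadj_u
          · intro _; exact neg_ne_zero.mpr hw0ne
        · by_cases h2 : i = μ u ∧ j = u
          · simp only [hAstardef, modifyUV, Matrix.of_apply, if_neg h1, if_pos h2]
            rw [h2.1, h2.2]
            constructor
            · intro _; exact hadj_u.symm
            · intro _; simpa using hw0ne
          · rw [hAstardef, modifyUV_entry_ne h1 h2]
            constructor
            · intro hN
              by_cases hm1 : (i,j) ∈ s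
              · have hmem := hm1
                simp only [hsdef, Finset.mem_filter] at hmem
                exact hmem.2.1
              · by_cases hm2 : (j,i) ∈ s
                · have hmem := hm2
                  simp only [hsdef, Finset.mem_filter] at hmem
                  exact hmem.2.1.symm
                · exfalso
                  apply hN
                  simp only [hNdef, MatZ, Matrix.of_apply, if_neg hm1, if_neg hm2]
            · intro hadj
              have hne' : ¬(((i,j) : V × V) = (u, μ u) ∨ ((i,j) : V × V) = (μ u, u)) := by
                rintro (h' | h') <;> rw [Prod.mk.injEq] at h'
                · exact h1 h'
                · exact h2 h'
              rcases hcover i j hadj hne' with hm | hm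
              · simp only [hNdef, MatZ, Matrix.of_apply, if_pos hm]
                exact hzs _ hm
              · have hm1 : (i,j) ∉ s := hs2 _ hm
                simp only [hNdef, MatZ, Matrix.of_apply, if_neg hm1, if_pos hm]
                exact neg_ne_zero.mpr (hzs _ hm)
    have hrankne : Astar.rank ≠ Fintype.card V :=
      fun h => (det_ne_zero_of_rank_eq_card h) hdet0
    have hrlt : Astar.rank < Fintype.card V :=
      lt_of_le_of_ne (Matrix.rank_le_card_width Astar) hrankne
    have hle : minSkewRank G ≤ Astar.rank := Nat.sInf_le ⟨Astar, hrepA, rfl⟩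
    rw [hmin] at hle
    omega
  · intro hPM
    rw [uniquePM_iff] at hPM
    obtain ⟨μ0, hμ0, huniq⟩ := hPM
    have hall : ∀ r ∈ RkSet, r = Fintype.card V := by
      rintro r ⟨A, hA, rfl⟩
      exact rank_eq_card_of_det
        (det_ne_of_uniquePM (Fintype.card V) G A μ0 le_rfl hA hμ0 fun μ h => huniq μ h)
    have hmem : Fintype.card V ∈ RkSet := by
      obtain ⟨r, hr⟩ := hne
      have h := hall r hr
      rwa [h] at hr
    constructor
    · exact le_antisymm (Nat.sInf_le hmem) (le_csInf hne fun r hr => (hall r hr).ge)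
    · exact le_antisymm (csSup_le hne fun r hr => (hall r hr).le) (le_csSup hbdd hmem)
end

section
/- For the cycle C_n on n ≥ 3 vertices, mr^-(C_n) = n - 2 if n is even and mr^-(C_n) = n - 1 if n is odd. -/
open Matrix SimpleGraph

attribute [local instance] Classical.propDecidable

section Aux

variable {n : ℕ} [NeZero n]

open Fin.CommRing Fin.NatCast

private lemma val_one_of (hn : 3 ≤ n) : ((1 : Fin n)).val = 1 := by
  rw [Fin.val_one', Nat.mod_eq_of_lt (by omega)]

private lemma two_ne_zero_fin (hn : 3 ≤ n) : (2 : Fin n) ≠ 0 := by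
  intro h
  have := congrArg Fin.val h
  rw [show (2 : Fin n) = ((2 : ℕ) : Fin n) by norm_cast, Fin.val_natCast] at this
  rw [Nat.mod_eq_of_lt (by omega)] at this
  simp at this

private lemma ne_add_one (hn : 3 ≤ n) (i : Fin n) : i ≠ i + 1 := by
  intro h
  have h1 : (1 : Fin n) = 0 := (left_eq_add.mp h)
  have := congrArg Fin.val h1
  rw [val_one_of hn] at this
  simp at this

private lemma ne_add_two (hn : 3 ≤ n) (a : Fin n) : a ≠ a + 1 + 1 := by
  intro h
  rw [add_assoc, one_add_one_eq_two] at h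
  exact two_ne_zero_fin hn (left_eq_add.mp h)

private lemma adj_succ (hn : 3 ≤ n) (i : Fin n) : (cycleGraph n).Adj i (i + 1) := by
  rw [cycleGraph_adj']
  right
  rw [show i + 1 - i = 1 by ring, val_one_of hn]

private lemma A_succ_ne {A : Matrix (Fin n) (Fin n) ℝ} (hn : 3 ≤ n)
    (hA : IsSkewRep (cycleGraph n) A) (i : Fin n) : A i (i + 1) ≠ 0 :=
  (hA.2 i (i + 1) (ne_add_one hn i)).mpr (adj_succ hn i)

private lemma repZero {A : Matrix (Fin n) (Fin n) ℝ} (hn : 3 ≤ n)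
    (hA : IsSkewRep (cycleGraph n) A) {i j : Fin n}
    (h1 : j ≠ i - 1) (h2 : j ≠ i + 1) : A i j = 0 := by
  by_cases hij : i = j
  · subst hij
    have := congrFun (congrFun hA.1 i) i
    simp only [transpose_apply, neg_apply, Pi.neg_apply] at this
    change A i i = -A i i at this
    linarith
  · by_contra h
    have hadj := (hA.2 i j hij).mp h
    rw [cycleGraph_adj'] at hadj
    rcases hadj with h' | h'
    · apply h1
      have : i - j = 1 := Fin.ext (by rw [h', val_one_of hn])
      have : i = 1 + j := by rw [← this]; ring
      rw [this]; ring
    · apply h2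
      have : j - i = 1 := Fin.ext (by rw [h', val_one_of hn])
      have : j = 1 + i := by rw [← this]; ring
      rw [this]; ring

private lemma ker_rec {A : Matrix (Fin n) (Fin n) ℝ} (hn : 3 ≤ n)
    (hA : IsSkewRep (cycleGraph n) A) {x : Fin n → ℝ}
    (hx : A.mulVec x = 0) (i : Fin n) :
    A i (i + 1) * x (i + 1) = -(A i (i - 1) * x (i - 1)) := by
  have h0 : (A.mulVec x) i = 0 := by rw [hx]; rfl
  rw [Matrix.mulVec, dotProduct] at h0
  have hne : i - 1 ≠ i + 1 := by
    intro h
    have : i = i + 2 := by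
      have := congrArg (· + 1) h
      simpa [sub_add_cancel, add_assoc, one_add_one_eq_two] using this
    exact two_ne_zero_fin hn (left_eq_add.mp this)
  have hsub : ∑ j, A i j * x j = ∑ j ∈ ({i - 1, i + 1} : Finset (Fin n)), A i j * x j := by
    refine (Finset.sum_subset (Finset.subset_univ _) ?_).symm
    intro c _ hc
    simp only [Finset.mem_insert, Finset.mem_singleton, not_or] at hc
    rw [repZero hn hA hc.1 hc.2, zero_mul]
  rw [hsub, Finset.sum_pair hne] at h0
  linarith

private lemma ker_step {A : Matrix (Fin n) (Fin n) ℝ} (hn : 3 ≤ n)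
    (hA : IsSkewRep (cycleGraph n) A) {x : Fin n → ℝ}
    (hx : A.mulVec x = 0) (k : ℕ) (h : x ((k : ℕ) : Fin n) = 0) :
    x ((k + 2 : ℕ) : Fin n) = 0 := by
  have hrec := ker_rec hn hA hx ((k + 1 : ℕ) : Fin n)
  have e1 : ((k + 1 : ℕ) : Fin n) + 1 = ((k + 2 : ℕ) : Fin n) := by push_cast; ring
  have e2 : ((k + 1 : ℕ) : Fin n) - 1 = ((k : ℕ) : Fin n) := by push_cast; ring
  rw [e1, e2, h, mul_zero, neg_zero, mul_eq_zero] at hrec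
  rcases hrec with h' | h'
  · exact absurd (e1 ▸ h') (A_succ_ne hn hA _)
  · exact h'

private lemma ker_zero_of {A : Matrix (Fin n) (Fin n) ℝ} (hn : 3 ≤ n)
    (hA : IsSkewRep (cycleGraph n) A) {x : Fin n → ℝ}
    (hx : A.mulVec x = 0) (h0 : x ((0 : ℕ) : Fin n) = 0) (h1 : x ((1 : ℕ) : Fin n) = 0) :
    x = 0 := by
  have key : ∀ k : ℕ, x ((k : ℕ) : Fin n) = 0 := by
    intro k
    induction k using Nat.twoStepInduction with
    | zero => exact h0
    | one => exact h1
    | more k ih _ => exact ker_step hn hA hx k ih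
  funext j
  have := key j.val
  rwa [Fin.cast_val_eq_self] at this

private lemma ker_zero_of_odd {A : Matrix (Fin n) (Fin n) ℝ} (hn : 3 ≤ n) (hodd : Odd n)
    (hA : IsSkewRep (cycleGraph n) A) {x : Fin n → ℝ}
    (hx : A.mulVec x = 0) (h0 : x ((0 : ℕ) : Fin n) = 0) :
    x = 0 := by
  have key : ∀ k : ℕ, x ((2 * k : ℕ) : Fin n) = 0 := by
    intro k
    induction k with
    | zero => simpa using h0
    | succ k ih =>
      have := ker_step hn hA hx (2 * k) ih
      rwa [show 2 * k + 2 = 2 * (k + 1) by ring] at this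
  funext j
  have := key (((n + 1) / 2) * j.val)
  rw [show 2 * ((n + 1) / 2 * j.val) = (n + 1) * j.val by
      rw [← mul_assoc, Nat.two_mul_div_two_of_even
        (by rcases hodd with ⟨m, hm⟩; exact ⟨m + 1, by omega⟩)]] at this
  rw [Nat.cast_mul, Nat.cast_add, Fin.natCast_self, Nat.cast_one, zero_add, one_mul,
    Fin.cast_val_eq_self] at this
  simpa using this

private lemma finrank_ker_le {A : Matrix (Fin n) (Fin n) ℝ} (m : ℕ) (f : Fin m → Fin n)
    (h : ∀ x, A.mulVec x = 0 → (∀ a, x (f a) = 0) → x = 0) :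
    Module.finrank ℝ (LinearMap.ker A.mulVecLin) ≤ m := by
  have hinj : Function.Injective
      ((LinearMap.funLeft ℝ ℝ f).comp (LinearMap.ker A.mulVecLin).subtype) := by
    rw [← LinearMap.ker_eq_bot, LinearMap.ker_eq_bot']
    rintro ⟨x, hx⟩ hfx
    have hx' : A.mulVec x = 0 := hx
    have : x = 0 := by
      refine h x hx' fun a => ?_
      have := congrFun hfx a
      simpa [LinearMap.funLeft] using this
    exact Subtype.ext this
  have := LinearMap.finrank_le_finrank_of_injective hinj
  simpa [Module.finrank_fin_fun] using this

private lemma rank_ker (A : Matrix (Fin n) (Fin n) ℝ) :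
    A.rank + Module.finrank ℝ (LinearMap.ker A.mulVecLin) = n := by
  rw [Matrix.rank]
  simpa using LinearMap.finrank_range_add_finrank_ker A.mulVecLin

/-- lower bound `n - 2` for any skew representation of the cycle -/
private lemma rank_lower {A : Matrix (Fin n) (Fin n) ℝ} (hn : 3 ≤ n)
    (hA : IsSkewRep (cycleGraph n) A) : n - 2 ≤ A.rank := by
  have hker : Module.finrank ℝ (LinearMap.ker A.mulVecLin) ≤ 2 := by
    refine finrank_ker_le 2 ![0, 1] fun x hx hz => ?_
    refine ker_zero_of hn hA hx ?_ ?_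
    · simpa using hz 0
    · simpa using hz 1
  have := rank_ker A
  omega

/-- lower bound `n - 1` for any skew representation of an odd cycle -/
private lemma rank_lower_odd {A : Matrix (Fin n) (Fin n) ℝ} (hn : 3 ≤ n) (hodd : Odd n)
    (hA : IsSkewRep (cycleGraph n) A) : n - 1 ≤ A.rank := by
  have hker : Module.finrank ℝ (LinearMap.ker A.mulVecLin) ≤ 1 := by
    refine finrank_ker_le 1 ![0] fun x hx hz => ?_
    refine ker_zero_of_odd hn hodd hA hx ?_
    simpa using hz 0
  have := rank_ker A
  omega

/-- upper bound `n - 1` for any skew representation of an odd cycle -/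
private lemma rank_upper_odd {A : Matrix (Fin n) (Fin n) ℝ} (hn : 3 ≤ n) (hodd : Odd n)
    (hA : IsSkewRep (cycleGraph n) A) : A.rank ≤ n - 1 := by
  have hdet : A.det = 0 := by
    have h1 : A.det = (-1) ^ n * A.det := by
      conv_lhs => rw [← Matrix.det_transpose, hA.1, Matrix.det_neg]
      simp
    rw [hodd.neg_one_pow] at h1
    linarith
  obtain ⟨v, hv, hkv⟩ := (Matrix.exists_mulVec_eq_zero_iff).mpr hdet
  have hker : 1 ≤ Module.finrank ℝ (LinearMap.ker A.mulVecLin) := by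
    rw [Nat.one_le_iff_ne_zero]
    intro hz
    rw [Submodule.finrank_eq_zero] at hz
    exact hv (by simpa [hz] using
      (LinearMap.mem_ker.mpr (show A.mulVecLin v = 0 by simpa using hkv)))
  have := rank_ker A
  omega

/-- the circulant skew matrix realizing the cycle -/
private noncomputable def cycMat (n : ℕ) [NeZero n] : Matrix (Fin n) (Fin n) ℝ :=
  fun i j => if j = i + 1 then 1 else if i = j + 1 then -1 else 0

private lemma not_both (hn : 3 ≤ n) {i j : Fin n} (h1 : j = i + 1) (h2 : i = j + 1) :
    False := by
  apply ne_add_two hn i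
  conv_lhs => rw [h2, h1]

private lemma cycMat_skewRep (hn : 3 ≤ n) : IsSkewRep (cycleGraph n) (cycMat n) := by
  constructor
  · funext i j
    show cycMat n j i = -cycMat n i j
    simp only [transpose_apply, neg_apply, Pi.neg_apply, cycMat]
    by_cases h1 : i = j + 1 <;> by_cases h2 : j = i + 1
    · exact absurd h1 (fun h => not_both hn h2 h)
    · rw [if_pos h1, if_neg h2, if_pos h1]; norm_num
    · rw [if_neg h1, if_pos h2]; simp [h1, h2]
    · rw [if_neg h1, if_neg h2, if_neg h2, if_neg h1]; norm_num
  · intro i j hij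
    rw [cycleGraph_adj']
    constructor
    · intro h
      simp only [cycMat, ne_eq, ite_eq_right_iff] at h
      by_cases h1 : j = i + 1
      · right; rw [h1, show i + 1 - i = 1 by ring, val_one_of hn]
      · by_cases h2 : i = j + 1
        · left; rw [h2, show j + 1 - j = 1 by ring, val_one_of hn]
        · exfalso; apply h <;> simp [h1, h2]
    · intro h
      rcases h with h | h
      · have h' : i = j + 1 := by
          have : i - j = 1 := Fin.ext (by rw [h, val_one_of hn])
          rw [← this]; ring
        have hne : ¬ j = i + 1 := fun hh => not_both hn hh h'
        simp only [cycMat, if_neg hne, if_pos h']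
        norm_num
      · have h' : j = i + 1 := by
          have : j - i = 1 := Fin.ext (by rw [h, val_one_of hn])
          rw [← this]; ring
        simp [cycMat, h']

private lemma cycMat_mulVec (hn : 3 ≤ n) (x : Fin n → ℝ) (i : Fin n) :
    (cycMat n).mulVec x i = x (i + 1) - x (i - 1) := by
  rw [Matrix.mulVec, dotProduct]
  have hne : i - 1 ≠ i + 1 := by
    intro h
    apply ne_add_two hn i
    conv_lhs => rw [show i = i - 1 + 1 by rw [sub_add_cancel], h]
  have hsub : ∑ j, cycMat n i j * x j
      = ∑ j ∈ ({i - 1, i + 1} : Finset (Fin n)), cycMat n i j * x j := by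
    refine (Finset.sum_subset (Finset.subset_univ _) ?_).symm
    intro c _ hc
    simp only [Finset.mem_insert, Finset.mem_singleton, not_or] at hc
    have hcne2 : ¬ i = c + 1 := by
      intro h1; exact hc.1 (by rw [h1]; ring)
    simp [cycMat, hc.2, hcne2]
  rw [hsub, Finset.sum_pair hne]
  have e1 : cycMat n i (i + 1) = 1 := by simp [cycMat]
  have e2 : cycMat n i (i - 1) = -1 := by
    have : i = i - 1 + 1 := by rw [sub_add_cancel]
    simp [cycMat, hne, ← this]
  rw [e1, e2]; ring

private lemma alt_succ (hn : 3 ≤ n) (hev : Even n) (i : Fin n) :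
    ((-1 : ℝ)) ^ ((i + 1 : Fin n)).val = -((-1 : ℝ)) ^ i.val := by
  have h2 : (2 : ℕ) ∣ n := hev.two_dvd
  have hval : ((i + 1 : Fin n)).val % 2 = (i.val + 1) % 2 := by
    rw [Fin.val_add, val_one_of hn, Nat.mod_mod_of_dvd _ h2]
  rw [neg_one_pow_eq_pow_mod_two, hval, ← neg_one_pow_eq_pow_mod_two, pow_succ]
  ring

/-- upper bound `n - 2` for the circulant representation when `n` is even -/
private lemma rank_upper_even (hn : 3 ≤ n) (hev : Even n) :
    (cycMat n).rank ≤ n - 2 := by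
  set v : Fin n → ℝ := fun _ => 1 with hv
  set w : Fin n → ℝ := fun j => (-1 : ℝ) ^ j.val with hw
  have hkv : (cycMat n).mulVec v = 0 := by
    funext i; rw [cycMat_mulVec hn]; simp [hv]
  have hwsucc : ∀ i : Fin n, w (i + 1) = -w i := fun i => alt_succ hn hev i
  have hkw : (cycMat n).mulVec w = 0 := by
    funext i
    rw [cycMat_mulVec hn]
    have h1 : w (i + 1) = -w i := hwsucc i
    have h2 : w (i - 1) = -w i := by
      have := hwsucc (i - 1)
      rw [sub_add_cancel] at this
      rw [← neg_eq_iff_eq_neg.mpr this]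
    rw [h1, h2]
    simp
  have hli : LinearIndependent ℝ ![v, w] := by
    rw [LinearIndependent.pair_iff]
    intro s t hst
    have h0 := congrFun hst (0 : Fin n)
    have h1 := congrFun hst (1 : Fin n)
    simp only [Pi.add_apply, Pi.smul_apply, smul_eq_mul, hv, hw, Pi.zero_apply] at h0 h1
    rw [val_one_of hn] at h1
    simp only [Fin.val_zero, pow_zero, pow_one, mul_one] at h0 h1
    constructor <;> linarith
  have hsp : Submodule.span ℝ (Set.range ![v, w]) ≤ LinearMap.ker (cycMat n).mulVecLin := by
    rw [Submodule.span_le]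
    rintro y ⟨a, rfl⟩
    fin_cases a <;>
      simp [LinearMap.mem_ker, Matrix.mulVecLin_apply, hkv, hkw]
  have hker : 2 ≤ Module.finrank ℝ (LinearMap.ker (cycMat n).mulVecLin) := by
    have := Submodule.finrank_mono hsp
    rwa [finrank_span_eq_card hli, Fintype.card_fin] at this
  have := rank_ker (cycMat n)
  omega

end Aux

/-- The minimum skew rank of the cycle `Cₙ` (`n ≥ 3`) is `n - 2` if `n` is even
and `n - 1` if `n` is odd. -/
theorem minSkewRank_cycleGraph (n : ℕ) (hn : 3 ≤ n) :
    minSkewRank (cycleGraph n) = if Even n then n - 2 else n - 1 := by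
  haveI : NeZero n := ⟨by omega⟩
  have hrep := cycMat_skewRep (n := n) hn
  by_cases hev : Even n
  · rw [if_pos hev]
    have hmem : (n - 2) ∈ {r | ∃ A : Matrix (Fin n) (Fin n) ℝ,
        IsSkewRep (cycleGraph n) A ∧ A.rank = r} :=
      ⟨cycMat n, hrep, le_antisymm (rank_upper_even hn hev) (rank_lower hn hrep)⟩
    refine le_antisymm (Nat.sInf_le hmem) ?_
    refine le_csInf ⟨_, hmem⟩ ?_
    rintro r ⟨A, hA, rfl⟩
    exact rank_lower hn hA
  · rw [if_neg hev]
    have hodd : Odd n := Nat.not_even_iff_odd.mp hev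
    have hmem : (n - 1) ∈ {r | ∃ A : Matrix (Fin n) (Fin n) ℝ,
        IsSkewRep (cycleGraph n) A ∧ A.rank = r} :=
      ⟨cycMat n, hrep, le_antisymm (rank_upper_odd hn hodd hrep) (rank_lower_odd hn hodd hrep)⟩
    refine le_antisymm (Nat.sInf_le hmem) ?_
    refine le_csInf ⟨_, hmem⟩ ?_
    rintro r ⟨A, hA, rfl⟩
    exact rank_lower_odd hn hodd hA
end

section
/- If U is a partial n-dandelion obtained from the cycle C_n by appending p_i ≥ 1 pendant leaves to each vertex in a nonempty subset V' of size k of the cycle's vertices, then mr^-(U) = 2k + 2·match(U - V'). -/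
open Matrix SimpleGraph

attribute [local instance] Classical.propDecidable

/-- The partial `n`-dandelion obtained from the cycle `Cₙ` by attaching `p i`
pendant leaves to the cycle vertex `f i`, for each `i : Fin k`. -/
def dandelion (n k : ℕ) (f : Fin k → Fin n) (p : Fin k → ℕ) :
    SimpleGraph ((Fin n) ⊕ (Σ i : Fin k, Fin (p i))) :=
  SimpleGraph.fromRel (fun x y =>
    match x, y with
    | Sum.inl a, Sum.inl b => (cycleGraph n).Adj a b
    | Sum.inl a, Sum.inr ⟨i, _⟩ => a = f i
    | _, _ => False)

set_option linter.unusedSectionVars false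
set_option maxHeartbeats 1000000
set_option synthInstance.maxHeartbeats 400000

section Basic
variable {V : Type*} [Fintype V] {G : SimpleGraph V} {A : Matrix V V ℝ}

lemma IsSkewRep.apply_apply (h : IsSkewRep G A) (i j : V) : A j i = - A i j := by
  have := congrFun (congrFun h.1 i) j
  simpa [Matrix.transpose_apply] using this

lemma IsSkewRep.diag (h : IsSkewRep G A) (i : V) : A i i = 0 := by
  have := h.apply_apply i i; linarith

lemma IsSkewRep.not_adj (h : IsSkewRep G A) {i j : V} (hne : i ≠ j) (hn : ¬ G.Adj i j) :
    A i j = 0 := by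
  by_contra h0; exact hn ((h.2 i j hne).1 h0)

lemma IsSkewRep.adj_ne (h : IsSkewRep G A) {i j : V} (ha : G.Adj i j) : A i j ≠ 0 :=
  (h.2 i j ha.ne).2 ha

lemma exists_isSkewRep (G : SimpleGraph V) : ∃ A, IsSkewRep G A := by
  classical
  let e := Fintype.equivFin V
  refine ⟨fun x y => if G.Adj x y then (if (e x : ℕ) < e y then (1:ℝ) else -1) else 0, ?_, ?_⟩
  · ext x y
    change (if G.Adj y x then (if (e y : ℕ) < e x then (1:ℝ) else -1) else 0) =
      -(if G.Adj x y then (if (e x : ℕ) < e y then (1:ℝ) else -1) else 0)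
    by_cases hadj : G.Adj x y
    · have hadj' : G.Adj y x := hadj.symm
      have hne : (e x : ℕ) ≠ (e y : ℕ) := by
        intro hc
        exact hadj.ne (e.injective (Fin.ext hc))
      rcases lt_or_gt_of_ne hne with h1 | h1
      · rw [if_pos hadj', if_pos hadj, if_neg (by omega), if_pos h1]
      · rw [if_pos hadj', if_pos hadj, if_pos h1, if_neg (by omega)]; norm_num
    · have hadj' : ¬ G.Adj y x := fun hc => hadj hc.symm
      rw [if_neg hadj', if_neg hadj]; norm_num
  · intro i j _
    by_cases hadj : G.Adj i j
    · simp only [if_pos hadj]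
      refine ⟨fun _ => hadj, fun _ => ?_⟩
      split <;> norm_num
    · simp [if_neg hadj, hadj]

lemma isSkewRep_submatrix (h : IsSkewRep G A) (s : Set V) :
    IsSkewRep (G.induce s) (A.submatrix (fun x : s => (x : V)) (fun x : s => (x : V))) := by
  constructor
  · ext x y
    simp only [Matrix.transpose_apply, Matrix.neg_apply, Matrix.submatrix_apply]
    exact h.apply_apply _ _
  · intro i j hne
    have hne' : (i : V) ≠ (j : V) := fun hc => hne (Subtype.ext hc)
    simpa [Matrix.submatrix_apply, SimpleGraph.comap_adj] using h.2 (i : V) (j : V) hne'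

-- matchNum helpers
lemma zero_mem_matchSet (G : SimpleGraph V) :
    0 ∈ {n | ∃ M : G.Subgraph, M.IsMatching ∧ M.edgeSet.ncard = n} := by
  refine ⟨⊥, ?_, by simp [Subgraph.edgeSet_bot]⟩
  intro v hv
  simp [Subgraph.verts_bot] at hv

lemma matchSet_bddAbove (G : SimpleGraph V) :
    BddAbove {n | ∃ M : G.Subgraph, M.IsMatching ∧ M.edgeSet.ncard = n} := by
  refine ⟨(Set.univ : Set (Sym2 V)).ncard, ?_⟩
  rintro n ⟨M, _, rfl⟩
  exact Set.ncard_le_ncard (Set.subset_univ _) (Set.finite_univ)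

lemma exists_max_matching (G : SimpleGraph V) :
    ∃ M : G.Subgraph, M.IsMatching ∧ M.edgeSet.ncard = matchNum G := by
  have := Nat.sSup_mem ⟨0, zero_mem_matchSet G⟩ (matchSet_bddAbove G)
  exact this

lemma le_matchNum {M : G.Subgraph} (hM : M.IsMatching) : M.edgeSet.ncard ≤ matchNum G :=
  le_csSup (matchSet_bddAbove G) ⟨M, hM, rfl⟩

lemma matchNum_eq_zero (h : ∀ x y : V, ¬ G.Adj x y) : matchNum G = 0 := by
  refine le_antisymm (csSup_le ⟨0, zero_mem_matchSet G⟩ ?_) (Nat.zero_le _)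
  rintro n ⟨M, _, rfl⟩
  have : M.edgeSet = ∅ := by
    ext e
    refine ⟨fun he => ?_, fun he => absurd he (Set.notMem_empty e)⟩
    induction e with
    | h x y => exact absurd (M.adj_sub he) (h x y)
  simp [this]

lemma rank_eq_zero_of_no_adj (h : ∀ x y : V, ¬ G.Adj x y) (hA : IsSkewRep G A) :
    A.rank = 0 := by
  have : A = 0 := by
    ext i j
    rcases eq_or_ne i j with rfl | hne
    · exact hA.diag i
    · exact hA.not_adj hne (h i j)
  rw [this, Matrix.rank_zero]

end Basic

section Split
variable {V : Type*} [Fintype V] {ι : Type*} [Fintype ι] {c : ι → V}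

noncomputable def splitEquiv (hc : Function.Injective c) (s : Set V)
    (hs : ∀ x, x ∈ s ↔ ∀ i, x ≠ c i) :
    ((s : Set V) ⊕ ι) ≃ V := by
  refine Equiv.ofBijective (Sum.elim (fun x => (x : V)) c) ⟨?_, ?_⟩
  · rintro (x | i) (y | j) h
    · simp only [Sum.elim_inl] at h; exact congrArg Sum.inl (Subtype.ext h)
    · exact absurd h ((hs _).mp x.2 j)
    · exact absurd h.symm ((hs _).mp y.2 i)
    · simp only [Sum.elim_inr] at h; exact congrArg Sum.inr (hc h)
  · intro x
    by_cases hx : ∀ i, x ≠ c i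
    · exact ⟨Sum.inl ⟨x, (hs x).mpr hx⟩, rfl⟩
    · push_neg at hx
      obtain ⟨i, hi⟩ := hx
      exact ⟨Sum.inr i, hi.symm⟩

lemma sum_split (hc : Function.Injective c) (s : Set V) [Fintype s]
    (hs : ∀ x, x ∈ s ↔ ∀ i, x ≠ c i) (f : V → ℝ) :
    ∑ x, f x = (∑ x : s, f (x : V)) + ∑ i, f (c i) := by
  rw [← Equiv.sum_comp (splitEquiv hc s hs) f, Fintype.sum_sum_type]
  rfl

lemma card_split (hc : Function.Injective c) (s : Set V) [Fintype s]
    (hs : ∀ x, x ∈ s ↔ ∀ i, x ≠ c i) :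
    Fintype.card V = Fintype.card s + Fintype.card ι := by
  rw [← Fintype.card_congr (splitEquiv hc s hs), Fintype.card_sum]

end Split

section Pendants

lemma mulVec_apply' {α : Type*} [Fintype α] (B : Matrix α α ℝ) (v : α → ℝ) (u : α) :
    B.mulVec v u = ∑ w, B u w * v w := rfl

lemma rank_eq_of_pendants {V : Type*} [Fintype V] {G : SimpleGraph V}
    {A : Matrix V V ℝ} (hA : IsSkewRep G A)
    {ι : Type*} [Fintype ι] {c l : ι → V}
    (hc : Function.Injective c)
    (hadj : ∀ i, G.Adj (c i) (l i))
    (hpend : ∀ i y, G.Adj (l i) y → y = c i)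
    (hlc : ∀ i j, l i ≠ c j) (S : Set V) [Fintype S] (hs : ∀ x, x ∈ S ↔ ∀ i, x ≠ c i) :
    A.rank = 2 * Fintype.card ι +
      (A.submatrix (fun x : S => (x : V)) (fun x : S => (x : V))).rank := by
  have smem : ∀ (x : S) (i : ι), (x : V) ≠ c i := fun x i => (hs _).mp x.2 i
  have lmem : ∀ i, l i ∈ S := fun i => (hs _).mpr (fun j => hlc i j)
  have cnmem : ∀ i, c i ∉ S := fun i h => ((hs _).mp h) i rfl
  have row_l : ∀ i w, w ≠ c i → A (l i) w = 0 := by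
    intro i w hw
    rcases eq_or_ne w (l i) with rfl | hwl
    · exact hA.diag _
    · exact hA.not_adj (Ne.symm hwl) (fun h => hw (hpend i w h))
  have col_l : ∀ i w, w ≠ c i → A w (l i) = 0 := by
    intro i w hw
    rw [hA.apply_apply (l i) w, row_l i w hw, neg_zero]
  have Acl_ne : ∀ i, A (c i) (l i) ≠ 0 := fun i => hA.adj_ne (hadj i)
  have Acl_zero : ∀ i j, i ≠ j → A (c i) (l j) = 0 := by
    intro i j hij
    exact col_l j (c i) (fun h => hij (hc h))
  set A' : Matrix S S ℝ := A.submatrix (fun x : S => (x : V)) (fun x : S => (x : V)) with hA'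
  -- kernel elements vanish on the centers
  have hker_c : ∀ x : V → ℝ, A.mulVec x = 0 → ∀ i, x (c i) = 0 := by
    intro x hx i
    have h0 : (0:ℝ) = ∑ w, A (l i) w * x w := by
      rw [← mulVec_apply', hx]; rfl
    have h1 : ∑ w, A (l i) w * x w = A (l i) (c i) * x (c i) := by
      apply Finset.sum_eq_single
      · intro b _ hb; rw [row_l i b hb, zero_mul]
      · intro hb; exact absurd (Finset.mem_univ _) hb
    have hAlc : A (l i) (c i) ≠ 0 := by
      rw [hA.apply_apply (c i) (l i)]
      simpa using Acl_ne i
    rcases mul_eq_zero.mp (h1 ▸ h0.symm) with h | h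
    · exact absurd h hAlc
    · exact h
  -- kernel elements restrict well
  have key : ∀ x : V → ℝ, A.mulVec x = 0 → ∀ u : V, ∑ w : S, A u ↑w * x ↑w = 0 := by
    intro x hx u
    have h0 : (0:ℝ) = ∑ w, A u w * x w := by rw [← mulVec_apply', hx]; rfl
    rw [sum_split hc S hs (fun w => A u w * x w)] at h0
    have h2 : ∑ i, A u (c i) * x (c i) = 0 := by
      apply Finset.sum_eq_zero
      intro i _
      rw [hker_c x hx i, mul_zero]
    rw [h2, add_zero] at h0
    exact h0.symm
  -- extension by zero of good vectors
  have hext : ∀ z : S → ℝ, (∀ u : V, ∑ w : S, A u ↑w * z w = 0) →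
      A.mulVec (fun w => if h : w ∈ S then z ⟨w, h⟩ else 0) = 0 := by
    intro z hz
    funext u
    rw [mulVec_apply', sum_split hc S hs (fun w => A u w * _)]
    have h1 : ∀ w : S, A u ↑w * (if h : (w:V) ∈ S then z ⟨↑w, h⟩ else 0) = A u ↑w * z w := by
      intro w
      rw [dif_pos w.2]
    have h2 : ∀ i, A u (c i) * (if h : c i ∈ S then z ⟨c i, h⟩ else 0) = 0 := by
      intro i
      rw [dif_neg (cnmem i), mul_zero]
    rw [Finset.sum_congr rfl (fun w _ => h1 w), Finset.sum_congr rfl (fun i _ => h2 i),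
      Finset.sum_const_zero, add_zero]
    exact hz u
  -- the functional map
  set Φ : (S → ℝ) →ₗ[ℝ] (ι → ℝ) :=
    { toFun := fun z i => ∑ w : S, A (c i) ↑w * z w
      map_add' := by
        intro z₁ z₂; funext i
        simp [mul_add, Finset.sum_add_distrib]
      map_smul' := by
        intro r z; funext i
        simp only [Pi.smul_apply, smul_eq_mul, RingHom.id_apply, Finset.mul_sum]
        exact Finset.sum_congr rfl fun w _ => by ring } with hΦ
  set K : Submodule ℝ (S → ℝ) := LinearMap.ker A'.mulVecLin with hK
  have hKmem : ∀ z : S → ℝ, z ∈ K ↔ ∀ u : S, ∑ w : S, A ↑u ↑w * z w = 0 := by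
    intro z
    rw [hK, LinearMap.mem_ker]
    constructor
    · intro h u
      have := congrFun h u
      rw [Matrix.mulVecLin_apply, mulVec_apply'] at this
      simpa [hA'] using this
    · intro h
      funext u
      rw [Matrix.mulVecLin_apply, mulVec_apply']
      simpa [hA'] using h u
  set Ψ : K →ₗ[ℝ] (ι → ℝ) := Φ.comp K.subtype with hΨ
  -- surjectivity of Ψ
  have hsurj : Function.Surjective Ψ := by
    intro t
    set z : S → ℝ := fun w => ∑ i, if (w:V) = l i then t i / A (c i) (l i) else 0 with hz
    have hz_sum : ∀ u : V, ∑ w : S, A u ↑w * z w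
        = ∑ i, A u (l i) * (t i / A (c i) (l i)) := by
      intro u
      rw [hz]
      simp only [Finset.mul_sum]
      rw [Finset.sum_comm]
      apply Finset.sum_congr rfl
      intro i _
      have h1 : (∑ w : S, A u ↑w * if (w:V) = l i then t i / A (c i) (l i) else 0)
          = A u ↑(⟨l i, lmem i⟩ : S)
            * (if ((⟨l i, lmem i⟩ : S) : V) = l i then t i / A (c i) (l i) else 0) := by
        apply Finset.sum_eq_single
        · intro b _ hb
          have hb' : (b : V) ≠ l i := fun h => hb (Subtype.ext h)
          rw [if_neg hb', mul_zero]
        · intro hb; exact absurd (Finset.mem_univ _) hb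
      rw [h1, if_pos rfl]
    have hzK : z ∈ K := by
      rw [hKmem]
      intro u
      rw [hz_sum]
      apply Finset.sum_eq_zero
      intro i _
      rw [col_l i (u:V) (smem u i), zero_mul]
    refine ⟨⟨z, hzK⟩, ?_⟩
    funext j
    show ∑ w : S, A (c j) ↑w * z w = t j
    rw [hz_sum]
    rw [Finset.sum_eq_single j]
    · rw [mul_comm, div_mul_cancel₀ _ (Acl_ne j)]
    · intro i _ hij
      rw [Acl_zero j i (Ne.symm hij), zero_mul]
    · intro hb; exact absurd (Finset.mem_univ _) hb
  -- the kernel equivalence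
  set ρ : (V → ℝ) →ₗ[ℝ] (S → ℝ) := LinearMap.funLeft ℝ ℝ (fun w : S => (w : V)) with hρ
  have hres1 : ∀ x : ↥(LinearMap.ker A.mulVecLin), ρ ↑x ∈ K := by
    intro x
    rw [hKmem]
    intro u
    exact key x (LinearMap.mem_ker.mp x.2) ↑u
  set F₁ : ↥(LinearMap.ker A.mulVecLin) →ₗ[ℝ] ↥K :=
    (ρ.comp (LinearMap.ker A.mulVecLin).subtype).codRestrict K hres1 with hF₁
  have hres2 : ∀ x, F₁ x ∈ LinearMap.ker Ψ := by
    intro x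
    rw [LinearMap.mem_ker]
    funext i
    show ∑ w : S, A (c i) ↑w * (x:V → ℝ) ↑w = 0
    exact key ↑x (LinearMap.mem_ker.mp x.2) (c i)
  set F₂ : ↥(LinearMap.ker A.mulVecLin) →ₗ[ℝ] ↥(LinearMap.ker Ψ) :=
    F₁.codRestrict (LinearMap.ker Ψ) hres2 with hF₂
  have hbij : Function.Bijective F₂ := by
    constructor
    · intro x y hxy
      have hxy' : ∀ w : S, (x : V → ℝ) ↑w = (y : V → ℝ) ↑w := by
        have h1 : ((F₂ x : ↥K) : S → ℝ) = ((F₂ y : ↥K) : S → ℝ) := by rw [hxy]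
        intro w
        exact congrFun h1 w
      apply Subtype.ext
      funext w
      by_cases hw : w ∈ S
      · exact hxy' ⟨w, hw⟩
      · have hw2 : ∃ i, w = c i := by
          by_contra hno
          push_neg at hno
          exact hw ((hs w).mpr hno)
        obtain ⟨i, rfl⟩ := hw2
        rw [hker_c x (LinearMap.mem_ker.mp x.2) i, hker_c y (LinearMap.mem_ker.mp y.2) i]
    · rintro ⟨⟨z, hzK⟩, hzΨ⟩
      have hzΨ' : ∀ i, ∑ w : S, A (c i) ↑w * z w = 0 := by
        intro i
        have := congrFun (LinearMap.mem_ker.mp hzΨ) i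
        exact this
      have hcond : ∀ u : V, ∑ w : S, A u ↑w * z w = 0 := by
        intro u
        by_cases hu : u ∈ S
        · exact (hKmem z).mp hzK ⟨u, hu⟩
        · have hu2 : ∃ i, u = c i := by
            by_contra hno
            push_neg at hno
            exact hu ((hs u).mpr hno)
          obtain ⟨i, rfl⟩ := hu2
          exact hzΨ' i
      set x : V → ℝ := fun w => if h : w ∈ S then z ⟨w, h⟩ else 0 with hx
      have hxker : x ∈ LinearMap.ker A.mulVecLin := by
        rw [LinearMap.mem_ker]
        show A.mulVec x = 0
        exact hext z hcond
      refine ⟨⟨x, hxker⟩, ?_⟩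
      apply Subtype.ext
      apply Subtype.ext
      funext w
      show x ↑w = z w
      rw [hx]
      simp only [dif_pos w.2]
  have hdim : Module.finrank ℝ ↥(LinearMap.ker A.mulVecLin)
      = Module.finrank ℝ ↥(LinearMap.ker Ψ) :=
    (LinearEquiv.ofBijective F₂ hbij).finrank_eq
  have e1 : A.rank + Module.finrank ℝ ↥(LinearMap.ker A.mulVecLin) = Fintype.card V := by
    have := LinearMap.finrank_range_add_finrank_ker A.mulVecLin
    rwa [Module.finrank_pi] at this
  have e2 : A'.rank + Module.finrank ℝ ↥K = Fintype.card S := by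
    have := LinearMap.finrank_range_add_finrank_ker A'.mulVecLin
    rwa [Module.finrank_pi] at this
  have e3 : Module.finrank ℝ ↥(LinearMap.range Ψ) + Module.finrank ℝ ↥(LinearMap.ker Ψ)
      = Module.finrank ℝ ↥K := LinearMap.finrank_range_add_finrank_ker Ψ
  have e4 : Module.finrank ℝ ↥(LinearMap.range Ψ) = Fintype.card ι := by
    rw [LinearMap.range_eq_top.mpr hsurj, finrank_top, Module.finrank_pi]
  have e6 : Fintype.card V = Fintype.card ↑S + Fintype.card ι := card_split hc S hs
  show A.rank = 2 * Fintype.card ι + A'.rank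
  omega

end Pendants

section MatchPendant
variable {V : Type*} [Fintype V] {G : SimpleGraph V}

lemma matchNum_pendant {v lf : V}
    (hadj : G.Adj lf v) (hpend : ∀ y, G.Adj lf y → y = v)
    (S : Set V) [Fintype S] (hs : ∀ x, x ∈ S ↔ x ≠ v) :
    matchNum G = matchNum (G.induce S) + 1 := by
  have smem : ∀ x : S, (x : V) ≠ v := fun x => (hs _).mp x.2
  have hlfS : lf ∈ S := (hs _).mpr hadj.ne
  -- ≥ direction
  have hge : matchNum (G.induce S) + 1 ≤ matchNum G := by
    obtain ⟨Mx, hMx, hMxcard⟩ := exists_max_matching (G.induce S)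
    set emb : G.induce S ↪g G := SimpleGraph.Embedding.induce S with hemb
    have hinj : Function.Injective emb.toHom := emb.injective
    set N : G.Subgraph := Mx.map emb.toHom with hN
    have hNmatch : N.IsMatching := hMx.map emb.toHom hinj
    have hNadj : ∀ x y : V, N.Adj x y ↔ ∃ a b : S, Mx.Adj a b ∧ (a : V) = x ∧ (b : V) = y := by
      intro x y
      constructor
      · rintro ⟨a, b, hab, rfl, rfl⟩
        exact ⟨a, b, hab, rfl, rfl⟩
      · rintro ⟨a, b, hab, rfl, rfl⟩
        exact ⟨a, b, hab, rfl, rfl⟩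
    have hdisj : Disjoint N.support (G.subgraphOfAdj hadj.symm).support := by
      rw [Set.disjoint_left]
      intro x hx hx2
      obtain ⟨y, hy⟩ := (Subgraph.mem_support _).mp hx
      obtain ⟨a, b, hab, rfl, rfl⟩ := (hNadj _ _).mp hy
      have hx2' := Subgraph.support_subset_verts _ hx2
      rw [subgraphOfAdj_verts] at hx2'
      rcases hx2' with h | h
      · exact smem a h
      · -- ↑a = lf : then its Mx-neighbor maps to v, contradiction
        have hGab : G.Adj ((a : V)) ((b : V)) := by
          have := Mx.adj_sub hab
          simpa using this
        rw [h] at hGab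
        exact smem b (hpend _ hGab)
    set P : G.Subgraph := G.subgraphOfAdj hadj.symm with hP
    have hPmatch : P.IsMatching := Subgraph.IsMatching.subgraphOfAdj _
    have hMmatch : (N ⊔ P).IsMatching := hNmatch.sup hPmatch hdisj
    have hNedge : N.edgeSet = Sym2.map (fun x : S => (x : V)) '' Mx.edgeSet := by
      ext e
      induction e with
      | h x y =>
        simp only [Subgraph.mem_edgeSet, Set.mem_image]
        constructor
        · intro h
          obtain ⟨a, b, hab, rfl, rfl⟩ := (hNadj _ _).mp h
          exact ⟨s(a, b), hab, by rw [Sym2.map_pair_eq]⟩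
        · rintro ⟨e', he', hmap⟩
          induction e' with
          | h a b =>
            rw [Sym2.map_pair_eq, Sym2.eq_iff] at hmap
            have hab : Mx.Adj a b := he'
            rcases hmap with ⟨h1, h2⟩ | ⟨h1, h2⟩
            · exact (hNadj _ _).mpr ⟨a, b, hab, h1, h2⟩
            · exact (hNadj _ _).mpr ⟨b, a, Mx.adj_symm hab, h2, h1⟩
    have hedgesup : (N ⊔ P).edgeSet = N.edgeSet ∪ {s(v, lf)} := by
      rw [Subgraph.edgeSet_sup]
      congr 1
      rw [hP]
      exact SimpleGraph.edgeSet_subgraphOfAdj _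
    have hnotin : s(v, lf) ∉ N.edgeSet := by
      intro h
      rw [Subgraph.mem_edgeSet] at h
      obtain ⟨a, b, hab, ha, hb⟩ := (hNadj _ _).mp h
      exact smem a ha
    have hcount : (N ⊔ P).edgeSet.ncard = Mx.edgeSet.ncard + 1 := by
      rw [hedgesup, Set.ncard_union_eq (by simpa using hnotin) (Set.toFinite _) (Set.toFinite _),
        hNedge, Set.ncard_image_of_injective _ (Sym2.map.injective Subtype.val_injective),
        Set.ncard_singleton]
    have := le_matchNum hMmatch
    rw [hcount, hMxcard] at this
    exact this
  -- ≤ direction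
  have hle : matchNum G ≤ matchNum (G.induce S) + 1 := by
    obtain ⟨M, hM, hMcard⟩ := exists_max_matching G
    set M' : (G.induce S).Subgraph :=
      { verts := {x : S | ∃ y : S, M.Adj ↑x ↑y}
        Adj := fun x y => M.Adj ↑x ↑y
        adj_sub := fun {x y} h => by simpa using M.adj_sub h
        edge_vert := fun {x y} h => ⟨y, h⟩
        symm := ⟨fun x y h => M.adj_symm h⟩ } with hM'def
    have hM'match : M'.IsMatching := by
      intro x hx
      obtain ⟨y, hy⟩ := hx
      obtain ⟨w, hw, huniq⟩ := hM (M.edge_vert hy)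
      refine ⟨y, hy, ?_⟩
      intro y' hy'
      have : (y' : V) = (y : V) := by rw [huniq _ hy', huniq _ hy]
      exact Subtype.ext this
    set D : Set (Sym2 V) := M.edgeSet ∩ {e | v ∈ e} with hD
    have him : Sym2.map (fun x : S => (x : V)) '' M'.edgeSet = M.edgeSet \ D := by
      ext e
      constructor
      · rintro ⟨e', he', rfl⟩
        induction e' with
        | h a b =>
          rw [Sym2.map_pair_eq]
          have hab : M.Adj ↑a ↑b := he'
          refine ⟨hab, ?_⟩
          rintro ⟨-, hv⟩
          rw [Set.mem_setOf_eq, Sym2.mem_iff] at hv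
          rcases hv with h | h
          · exact smem a h.symm
          · exact smem b h.symm
      · rintro ⟨he, hv⟩
        induction e with
        | h a b =>
          have hab : M.Adj a b := he
          have ha : a ∈ S := (hs _).mpr (fun h =>
            hv ⟨he, by rw [Set.mem_setOf_eq, ← h]; exact Sym2.mem_mk_left a b⟩)
          have hb : b ∈ S := (hs _).mpr (fun h =>
            hv ⟨he, by rw [Set.mem_setOf_eq, ← h]; exact Sym2.mem_mk_right a b⟩)
          exact ⟨s(⟨a, ha⟩, ⟨b, hb⟩), hab, by rw [Sym2.map_pair_eq]⟩
    have hDcard : D.ncard ≤ 1 := by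
      rw [Set.ncard_le_one_iff (Set.toFinite _)]
      rintro e₁ e₂ ⟨he₁, hv₁⟩ ⟨he₂, hv₂⟩
      rw [Set.mem_setOf_eq] at hv₁ hv₂
      obtain ⟨w₁, rfl⟩ := Sym2.mem_iff_exists.mp hv₁
      obtain ⟨w₂, rfl⟩ := Sym2.mem_iff_exists.mp hv₂
      have h₁ : M.Adj v w₁ := he₁
      have h₂ : M.Adj v w₂ := he₂
      obtain ⟨w, hw, huniq⟩ := hM (M.edge_vert h₁)
      rw [huniq _ h₁, huniq _ h₂]
    have hsplit : M.edgeSet.ncard = (M.edgeSet \ D).ncard + D.ncard := by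
      rw [← Set.ncard_union_eq (Set.disjoint_sdiff_left) (Set.toFinite _) (Set.toFinite _),
        Set.diff_union_of_subset Set.inter_subset_left]
    have hMim : (M.edgeSet \ D).ncard = M'.edgeSet.ncard := by
      rw [← him, Set.ncard_image_of_injective _ (Sym2.map.injective Subtype.val_injective)]
    have hfin : M'.edgeSet.ncard ≤ matchNum (G.induce S) := le_matchNum hM'match
    omega
  omega

end MatchPendant

section Main
universe u

lemma rank_eq_two_mul_matchNum (m : ℕ) :
    ∀ (V : Type u) [Fintype V] (G : SimpleGraph V), Fintype.card V ≤ m →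
    (∃ h : V → ℕ, Function.Injective h ∧ ∀ x : V, {y | G.Adj x y ∧ h x < h y}.Subsingleton) →
    ∀ A : Matrix V V ℝ, IsSkewRep G A → A.rank = 2 * matchNum G := by
  induction m with
  | zero =>
    intro V _ G hcard _ A hA
    have hempty : ∀ x y : V, ¬ G.Adj x y := by
      intro x y
      have h0 : Fintype.card V = 0 := le_antisymm hcard (Nat.zero_le _)
      exact fun _ => absurd (Fintype.card_pos_iff.mpr ⟨x⟩) (by omega)
    rw [rank_eq_zero_of_no_adj hempty hA, matchNum_eq_zero hempty, mul_zero]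
  | succ m ih =>
    intro V _ G hcard hD A hA
    by_cases hE : ∀ x y : V, ¬ G.Adj x y
    · rw [rank_eq_zero_of_no_adj hE hA, matchNum_eq_zero hE, mul_zero]
    · push_neg at hE
      obtain ⟨a, b, hab⟩ := hE
      obtain ⟨h, hinj, hsub⟩ := hD
      obtain ⟨lf, hlfW, hmin⟩ := Finset.exists_min_image
        (Finset.univ.filter (fun x : V => ∃ y, G.Adj x y)) h
        ⟨a, by simp only [Finset.mem_filter, Finset.mem_univ, true_and]; exact ⟨b, hab⟩⟩
      rw [Finset.mem_filter] at hlfW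
      obtain ⟨-, v, hadj⟩ := hlfW
      have hpend : ∀ y, G.Adj lf y → y = v := by
        have key : ∀ z, G.Adj lf z → z ∈ {y | G.Adj lf y ∧ h lf < h y} := by
          intro z hz
          refine ⟨hz, lt_of_le_of_ne ?_ ?_⟩
          · exact hmin z (by
              rw [Finset.mem_filter]
              exact ⟨Finset.mem_univ _, lf, hz.symm⟩)
          · exact fun hc => hz.ne (hinj hc)
        intro y hy
        exact hsub lf (key y hy) (key v hadj)
      have hcinj : Function.Injective (fun _ : Fin 1 => v) := fun i j _ => Subsingleton.elim i j
      set S : Set V := {x : V | x ≠ v} with hSdef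
      have hsiff : ∀ x, x ∈ S ↔ ∀ _i : Fin 1, x ≠ v := fun x => ⟨fun hh _ => hh, fun hh => hh 0⟩
      have hC := rank_eq_of_pendants hA (ι := Fin 1) (c := fun _ => v) (l := fun _ => lf)
        hcinj (fun _ => hadj.symm) (fun _ y hy => hpend y hy) (fun _ _ => hadj.ne) S hsiff
      have hcards : Fintype.card V = Fintype.card S + 1 := by
        have h1 := card_split hcinj S hsiff
        rw [Fintype.card_fin] at h1
        exact h1
      rw [Fintype.card_fin] at hC
      have hA' : IsSkewRep (G.induce S) (A.submatrix (fun x : S => (x : V)) (fun x : S => (x : V))) :=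
        isSkewRep_submatrix hA S
      have hD' : ∃ h' : S → ℕ, Function.Injective h' ∧
          ∀ x : S, {y : S | (G.induce S).Adj x y ∧ h' x < h' y}.Subsingleton := by
        refine ⟨fun x => h ↑x, fun x y hxy => Subtype.ext (hinj hxy), ?_⟩
        intro x y₁ hy₁ y₂ hy₂
        apply Subtype.ext
        have m1 : (y₁ : V) ∈ {y | G.Adj ↑x y ∧ h ↑x < h y} := ⟨by simpa using hy₁.1, hy₁.2⟩
        have m2 : (y₂ : V) ∈ {y | G.Adj ↑x y ∧ h ↑x < h y} := ⟨by simpa using hy₂.1, hy₂.2⟩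
        exact hsub ↑x m1 m2
      have hrank' := ih S (G.induce S) (by omega) hD' _ hA'
      have hmatch : matchNum G = matchNum (G.induce S) + 1 :=
        matchNum_pendant hadj hpend S (fun x => Iff.rfl)
      rw [hC, hrank', hmatch]
      ring

end Main


section Dandelion

variable {n k : ℕ} {f : Fin k → Fin n} {p : Fin k → ℕ}

lemma dand_adj_inl_inl (a b : Fin n) :
    (dandelion n k f p).Adj (Sum.inl a) (Sum.inl b) ↔ (cycleGraph n).Adj a b := by
  unfold dandelion
  rw [SimpleGraph.fromRel_adj]
  constructor
  · rintro ⟨hne, h | h⟩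
    · exact h
    · exact h.symm
  · intro h
    exact ⟨fun hc => h.ne (Sum.inl.inj hc), Or.inl h⟩

lemma dand_adj_inl_inr (a : Fin n) (s : Σ i : Fin k, Fin (p i)) :
    (dandelion n k f p).Adj (Sum.inl a) (Sum.inr s) ↔ a = f s.1 := by
  obtain ⟨i, t⟩ := s
  unfold dandelion
  rw [SimpleGraph.fromRel_adj]
  constructor
  · rintro ⟨hne, h | h⟩
    · exact h
    · exact h.elim
  · rintro rfl
    exact ⟨by simp, Or.inl rfl⟩

lemma dand_not_adj_inr_inr (s u : Σ i : Fin k, Fin (p i)) :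
    ¬ (dandelion n k f p).Adj (Sum.inr s) (Sum.inr u) := by
  obtain ⟨i, t⟩ := s
  obtain ⟨j, w⟩ := u
  unfold dandelion
  rw [SimpleGraph.fromRel_adj]
  rintro ⟨hne, h | h⟩ <;> exact h

lemma fin_succ_sub_val [NeZero n] (hn : 3 ≤ n) (v₀ b : Fin n) (hb : b + 1 ≠ v₀) :
    ((b + 1) - v₀).val = (b - v₀).val + 1 := by
  have h1 : b + 1 - v₀ = (b - v₀) + 1 := by abel
  have hval : ∀ e : Fin n, (e + 1).val = (e.val + 1) % n := by
    intro e
    rw [Fin.add_def, Fin.val_one']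
    simp only [Nat.mod_eq_of_lt (show 1 < n by omega)]
  rw [h1]
  set d := b - v₀ with hd
  rcases Nat.lt_or_ge (d.val + 1) n with hlt | hge
  · rw [hval d, Nat.mod_eq_of_lt hlt]
  · exfalso
    have hdval : d.val = n - 1 := by have := d.isLt; omega
    have hz : (d + 1).val = 0 := by
      rw [hval d, hdval]
      have hnn : n - 1 + 1 = n := by omega
      rw [hnn, Nat.mod_self]
    have hz' : d + 1 = 0 := Fin.ext (by rw [hz, Fin.val_zero])
    apply hb
    have h3 : b + 1 - v₀ = 0 := by rw [h1]; exact hz'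
    exact sub_eq_zero.mp h3

end Dandelion

/-- For a partial `n`-dandelion `U` with `k` cycle vertices carrying leaves,
`mr⁻(U) = 2k + 2·match(U - V')`, where `V'` is the set of cycle vertices
carrying leaves. -/
theorem minSkewRank_dandelion (n k : ℕ) (hn : 3 ≤ n) (hk : 1 ≤ k)
    (f : Fin k → Fin n) (hf : Function.Injective f)
    (p : Fin k → ℕ) (hp : ∀ i, 1 ≤ p i) :
    minSkewRank (dandelion n k f p) =
      2 * k + 2 * matchNum ((dandelion n k f p).induce
        {x | ∀ i : Fin k, x ≠ Sum.inl (f i)}) := by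
  haveI : NeZero n := ⟨by omega⟩
  have hone : ((1 : Fin n) : ℕ) = 1 := by
    rw [Fin.val_one']
    exact Nat.mod_eq_of_lt (by omega)
  have hcinj : Function.Injective
      (fun i : Fin k => (Sum.inl (f i) : (Fin n) ⊕ (Σ i : Fin k, Fin (p i)))) :=
    fun i j h => hf (Sum.inl.inj h)
  have hadjcl : ∀ i : Fin k, (dandelion n k f p).Adj (Sum.inl (f i))
      (Sum.inr ⟨i, ⟨0, hp i⟩⟩) := by
    intro i
    exact (dand_adj_inl_inr _ _).mpr rfl
  have hpend : ∀ (i : Fin k) (y : (Fin n) ⊕ (Σ i : Fin k, Fin (p i))),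
      (dandelion n k f p).Adj (Sum.inr ⟨i, ⟨0, hp i⟩⟩) y → y = Sum.inl (f i) := by
    intro i y hy
    match y with
    | Sum.inl a =>
      have := (dand_adj_inl_inr a ⟨i, ⟨0, hp i⟩⟩).mp hy.symm
      rw [this]
    | Sum.inr s =>
      exact absurd hy (dand_not_adj_inr_inr _ _)
  have hlc : ∀ i j : Fin k,
      (Sum.inr ⟨i, ⟨0, hp i⟩⟩ : (Fin n) ⊕ (Σ i : Fin k, Fin (p i))) ≠ Sum.inl (f j) := by
    intro i j
    simp
  have hD : ∃ h : ({x | ∀ i : Fin k, x ≠ Sum.inl (f i)} :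
        Set ((Fin n) ⊕ (Σ i : Fin k, Fin (p i)))) → ℕ, Function.Injective h ∧
      ∀ x : ({x | ∀ i : Fin k, x ≠ Sum.inl (f i)} : Set ((Fin n) ⊕ (Σ i : Fin k, Fin (p i)))),
        {y | ((dandelion n k f p).induce {x | ∀ i : Fin k, x ≠ Sum.inl (f i)}).Adj x y ∧ h x < h y}.Subsingleton := by
    set v₀ : Fin n := f ⟨0, hk⟩ with hv₀
    set eσ := Fintype.equivFin (Σ i : Fin k, Fin (p i)) with heσ
    refine ⟨fun x => Sum.elim (fun a => ((a - v₀ : Fin n)).val)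
      (fun s => n + (eσ s : ℕ)) x.val, ?_, ?_⟩
    · rintro ⟨xv, hx⟩ ⟨yv, hy⟩ hxy
      apply Subtype.ext
      show xv = yv
      match xv, yv with
      | Sum.inl a, Sum.inl b =>
        simp only [Sum.elim_inl] at hxy
        have h1 : a - v₀ = b - v₀ := Fin.ext hxy
        have h2 := congrArg (· + v₀) h1
        simpa [sub_add_cancel] using h2
      | Sum.inl a, Sum.inr s =>
        simp only [Sum.elim_inl, Sum.elim_inr] at hxy
        have := (a - v₀).isLt
        omega
      | Sum.inr s, Sum.inl a =>
        simp only [Sum.elim_inl, Sum.elim_inr] at hxy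
        have := (a - v₀).isLt
        omega
      | Sum.inr s, Sum.inr u =>
        simp only [Sum.elim_inr] at hxy
        have h1 : (eσ s : ℕ) = (eσ u : ℕ) := by omega
        have h2 : eσ s = eσ u := Fin.ext h1
        rw [eσ.injective h2]
    · rintro ⟨xv, hxS⟩ y₁ hy₁ y₂ hy₂
      have claim : ∀ (y : ({x | ∀ i : Fin k, x ≠ Sum.inl (f i)} : Set ((Fin n) ⊕ (Σ i : Fin k, Fin (p i))))),
          ((dandelion n k f p).induce {x | ∀ i : Fin k, x ≠ Sum.inl (f i)}).Adj ⟨xv, hxS⟩ y →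
          (Sum.elim (fun a => ((a - v₀ : Fin n)).val) (fun s => n + (eσ s : ℕ)) xv
            < Sum.elim (fun a => ((a - v₀ : Fin n)).val) (fun s => n + (eσ s : ℕ)) y.val) →
          ∃ a : Fin n, xv = Sum.inl a ∧ (y : (Fin n) ⊕ (Σ i : Fin k, Fin (p i)))
            = Sum.inl (a + 1) := by
        rintro ⟨yv, hyS⟩ hadj hlt
        have hU : (dandelion n k f p).Adj xv yv := hadj
        match xv, yv with
        | Sum.inr s, Sum.inl a =>
          exfalso
          have h1 := (dand_adj_inl_inr a s).mp hU.symm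
          exact hyS s.1 (by rw [h1])
        | Sum.inr s, Sum.inr u => exact absurd hU (dand_not_adj_inr_inr _ _)
        | Sum.inl a, Sum.inr u =>
          exfalso
          have h1 := (dand_adj_inl_inr a u).mp hU
          exact hxS u.1 (by rw [h1])
        | Sum.inl a, Sum.inl b =>
          refine ⟨a, rfl, ?_⟩
          have hcyc := (dand_adj_inl_inl a b).mp hU
          rw [cycleGraph_adj'] at hcyc
          have ha : a ≠ v₀ := fun hc => hxS ⟨0, hk⟩ (by rw [hc, hv₀])
          have hb : b ≠ v₀ := fun hc => hyS ⟨0, hk⟩ (by rw [hc, hv₀])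
          simp only [Sum.elim_inl] at hlt
          have hb1 : b = a + 1 := by
            rcases hcyc with h1 | h1
            · exfalso
              have hab : a - b = 1 := Fin.ext (by rw [hone]; exact h1)
              have hab' : a = b + 1 := by
                have h2 := congrArg (· + b) hab
                simp only [sub_add_cancel] at h2
                rw [h2, add_comm]
              have hinc : ((b + 1) - v₀).val = (b - v₀).val + 1 :=
                fin_succ_sub_val hn v₀ b (fun hc => ha (hab'.trans hc))
              rw [hab', hinc] at hlt
              omega
            · have hba : b - a = 1 := Fin.ext (by rw [hone]; exact h1)
              have h2 := congrArg (· + a) hba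
              simp only [sub_add_cancel] at h2
              rw [h2, add_comm]
          show (Sum.inl b : (Fin n) ⊕ (Σ i : Fin k, Fin (p i))) = Sum.inl (a + 1)
          rw [hb1]
      obtain ⟨a, hxa, h1⟩ := claim y₁ hy₁.1 hy₁.2
      obtain ⟨a', hxa', h2⟩ := claim y₂ hy₂.1 hy₂.2
      apply Subtype.ext
      rw [h1, h2]
      rw [hxa] at hxa'
      rw [Sum.inl.inj hxa']
  have key : ∀ A : Matrix ((Fin n) ⊕ (Σ i : Fin k, Fin (p i)))
      ((Fin n) ⊕ (Σ i : Fin k, Fin (p i))) ℝ, IsSkewRep (dandelion n k f p) A →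
      A.rank = 2 * k + 2 * matchNum ((dandelion n k f p).induce
        {x | ∀ i : Fin k, x ≠ Sum.inl (f i)}) := by
    intro A hA
    have hC := rank_eq_of_pendants hA (ι := Fin k) (c := fun i => Sum.inl (f i))
      (l := fun i => Sum.inr ⟨i, ⟨0, hp i⟩⟩) hcinj hadjcl hpend hlc
      ({x | ∀ i : Fin k, x ≠ Sum.inl (f i)} : Set ((Fin n) ⊕ (Σ i : Fin k, Fin (p i)))) (fun x => Iff.rfl)
    have hA' := isSkewRep_submatrix hA ({x | ∀ i : Fin k, x ≠ Sum.inl (f i)} : Set ((Fin n) ⊕ (Σ i : Fin k, Fin (p i))))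
    have hrank' := rank_eq_two_mul_matchNum
      (Fintype.card ({x | ∀ i : Fin k, x ≠ Sum.inl (f i)} : Set ((Fin n) ⊕ (Σ i : Fin k, Fin (p i)))))
      ({x | ∀ i : Fin k, x ≠ Sum.inl (f i)} : Set ((Fin n) ⊕ (Σ i : Fin k, Fin (p i))))
      ((dandelion n k f p).induce {x | ∀ i : Fin k, x ≠ Sum.inl (f i)}) le_rfl hD _ hA'
    rw [hC, Fintype.card_fin, hrank']
  obtain ⟨A₀, hA₀⟩ := exists_isSkewRep (dandelion n k f p)
  have hset : {r | ∃ A, IsSkewRep (dandelion n k f p) A ∧ A.rank = r}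
      = {2 * k + 2 * matchNum ((dandelion n k f p).induce
        {x | ∀ i : Fin k, x ≠ Sum.inl (f i)})} := by
    ext r
    simp only [Set.mem_setOf_eq, Set.mem_singleton_iff]
    constructor
    · rintro ⟨A, hA, rfl⟩
      exact key A hA
    · rintro rfl
      exact ⟨A₀, hA₀, key A₀ hA₀⟩
  rw [minSkewRank, hset, csInf_singleton]
end
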